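/- arXiv:1710.07127 — 4 statements merged into one kernel-verified Lean document; each statement's English description precedes it below -/
import Mathlib

section
/- For every nonnegative integer n and every complex number z, ∑_{k=0}^{n} (4^{2k+1}/(2(n-k)+1)) · C(2n+1,2k+1) · B_{2k+1}(z) = ∑_{k=0}^{n} 2^{2k+1} · C(2n+1,2k+1) · E_{2k+1}(2z) − ∑_{k=0}^{n} 2^{2k} · C(2n+1,2k) · E_{2k}(2z), where C(n,k) denotes the binomial coefficient. -/
open Finset

/-- The Bernoulli polynomial `B_n` evaluated at a complex number `z`,
with generating function `t·e^{zt}/(e^t−1) = ∑_{n≥0} B_n(z)·t^n/n!`. -/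
noncomputable def bernoulliPoly (n : ℕ) (z : ℂ) : ℂ :=
  Polynomial.aeval z (Polynomial.bernoulli n)

/-- The Euler polynomial `E_n` evaluated at a complex number `z`,
with generating function `2·e^{zt}/(e^t+1) = ∑_{n≥0} E_n(z)·t^n/n!`,
given by the explicit formula `E_n(z) = ∑_{k=0}^n 2^{-k} ∑_{j=0}^k (-1)^j C(k,j)(z+j)^n`. -/
noncomputable def eulerPoly (n : ℕ) (z : ℂ) : ℂ :=
  ∑ k ∈ range (n + 1), (1 / 2 ^ k : ℂ) *
    ∑ j ∈ range (k + 1), (-1) ^ j * (k.choose j : ℂ) * (z + j) ^ n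

-- periodicity lemma
lemma const_of_periodic (p : Polynomial ℂ) (h : ∀ x : ℂ, p.eval (x+1) = p.eval x) :
    ∀ x y : ℂ, p.eval x = p.eval y := by
  have key : p - Polynomial.C (p.eval 0) = 0 := by
    apply Polynomial.eq_zero_of_infinite_isRoot
    apply Set.infinite_of_injective_forall_mem (f := fun n : ℕ => (n : ℂ)) Nat.cast_injective
    intro j
    have hj : p.eval (j : ℂ) = p.eval 0 := by
      induction j with
      | zero => simp
      | succ k ih => push_cast; rw [h]; exact ih
    simp [Polynomial.IsRoot, hj]
  have h2 : ∀ t : ℂ, p.eval t = p.eval 0 := by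
    intro t
    have := congrArg (Polynomial.eval t) key
    simpa [sub_eq_zero] using this
  intro x y; rw [h2 x, h2 y]

-- pairing lemma
lemma sum_pair (f : ℕ → ℂ) (n : ℕ) :
    ∑ j ∈ range (2*n+2), f j = ∑ k ∈ range (n+1), (f (2*k) + f (2*k+1)) := by
  induction n with
  | zero => simp [Finset.sum_range_succ]
  | succ m ih =>
    have e : 2*(m+1)+2 = (2*m+2)+1+1 := by ring
    rw [e, Finset.sum_range_succ, Finset.sum_range_succ, ih]
    conv_rhs => rw [Finset.sum_range_succ]
    simp [show 2*(m+1)=2*m+2 from by ring, show 2*(m+1)+1=2*m+3 from by ring, add_assoc]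

noncomputable def Tm (m k : ℕ) (x : ℂ) : ℂ :=
  ∑ j ∈ range (k+1), (-1)^j * (k.choose j : ℂ) * (x + j)^m

lemma Tm_succ (m k : ℕ) (x : ℂ) : Tm m (k+1) x = Tm m k x - Tm m k (x+1) := by
  have hg : Tm m k x
      = x^m + ∑ i ∈ range (k+1), (-1:ℂ)^(i+1) * (k.choose (i+1) : ℂ) * (x+(i+1:ℕ))^m := by
    conv_rhs => rw [Finset.sum_range_succ]
    rw [Nat.choose_succ_self]
    rw [Tm, Finset.sum_range_succ']
    push_cast
    simp
    ring
  rw [Tm, Finset.sum_range_succ']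
  have hterm : ∀ i ∈ range (k+1), (-1:ℂ)^(i+1) * ((k+1).choose (i+1) : ℂ) * (x+(i+1:ℕ))^m
      = (-1:ℂ)^(i+1) * (k.choose (i+1) : ℂ) * (x+(i+1:ℕ))^m
        - (-1:ℂ)^i * (k.choose i : ℂ) * ((x+1)+(i:ℕ))^m := by
    intro i _
    rw [Nat.choose_succ_succ]
    push_cast
    rw [show x + 1 + (i:ℂ) = x + ((i:ℂ)+1) by ring]
    ring
  rw [Finset.sum_congr rfl hterm, Finset.sum_sub_distrib]
  rw [hg, Tm]
  push_cast
  simp [Nat.choose_zero_right]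
  ring

lemma Tm_sub (m k : ℕ) (x : ℂ) :
    Tm m k x - Tm m k (x+1) = - ∑ i ∈ range m, (m.choose i : ℂ) * Tm i k x := by
  rw [Tm, Tm, ← Finset.sum_sub_distrib]
  have hterm : ∀ j ∈ range (k+1),
      (-1:ℂ)^j * (k.choose j : ℂ) * (x+j)^m - (-1:ℂ)^j * (k.choose j : ℂ) * ((x+1)+j)^m
      = ∑ i ∈ range m, (-(m.choose i : ℂ)) * ((-1:ℂ)^j * (k.choose j : ℂ) * (x+j)^i) := by
    intro j _
    have hb : ((x+j)+1)^m = ∑ i ∈ range (m+1), (x+j)^i * 1^(m-i) * (m.choose i : ℂ) :=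
      add_pow (x+(j:ℂ)) 1 m
    rw [Finset.sum_range_succ] at hb
    simp only [one_pow, mul_one, Nat.choose_self, Nat.cast_one] at hb
    have hb2 : ((x+1)+j : ℂ) = (x+j)+1 := by ring
    rw [hb2, hb, mul_add, Finset.mul_sum]
    rw [show ∀ a s : ℂ, a - (s + a) = -s from by intros; ring]
    rw [← Finset.sum_neg_distrib]
    apply Finset.sum_congr rfl
    intro i _
    ring
  rw [Finset.sum_congr rfl hterm, Finset.sum_comm]
  rw [← Finset.sum_neg_distrib]
  apply Finset.sum_congr rfl
  intro i _
  rw [Tm, Finset.mul_sum]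
  rw [← Finset.sum_neg_distrib]
  apply Finset.sum_congr rfl
  intro j _
  ring

lemma T_vanish (m : ℕ) : ∀ k, m < k → ∀ x : ℂ, Tm m k x = 0 := by
  induction m using Nat.strong_induction_on with
  | _ m ih =>
    intro k hk x
    obtain ⟨k', rfl⟩ : ∃ k', k = k'+1 := ⟨k-1, by omega⟩
    rw [Tm_succ, Tm_sub]
    rw [Finset.sum_eq_zero]
    · simp
    · intro i hi
      have hi' := mem_range.mp hi
      rw [ih i hi' k' (by omega) x]
      ring


lemma euler_eq_T (m : ℕ) (y : ℂ) : eulerPoly m y = ∑ k ∈ range (m+1), (1/2^k : ℂ) * Tm m k y := rfl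

lemma euler_fe (m : ℕ) (x : ℂ) : eulerPoly m x + eulerPoly m (x+1) = 2 * x^m := by
  rw [euler_eq_T, euler_eq_T, ← Finset.sum_add_distrib]
  have hterm : ∀ k ∈ range (m+1), ((1/2^k : ℂ) * Tm m k x + (1/2^k) * Tm m k (x+1))
      = (fun k => 2 * (1/2^k : ℂ) * Tm m k x) k - (fun k => 2 * (1/2^k : ℂ) * Tm m k x) (k+1) := by
    intro k _
    simp only
    have h2 : Tm m k (x+1) = Tm m k x - Tm m (k+1) x := by rw [Tm_succ]; ring
    rw [h2, pow_succ]
    field_simp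
    ring
  rw [Finset.sum_congr rfl hterm, Finset.sum_range_sub']
  rw [T_vanish m (m+1) (by omega)]
  simp [Tm]


noncomputable def bm (m : ℕ) : Polynomial ℂ := (Polynomial.bernoulli m).map (algebraMap ℚ ℂ)

lemma bernoulliPoly_eq_eval (m : ℕ) (x : ℂ) : bernoulliPoly m x = (bm m).eval x := by
  rw [bernoulliPoly, bm, Polynomial.aeval_def, Polynomial.eval₂_eq_eval_map]

lemma bern_add_one (m : ℕ) (x : ℂ) :
    bernoulliPoly m (x + 1) = bernoulliPoly m x + m * x ^ (m - 1) := by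
  have hq : (Polynomial.bernoulli m).comp (Polynomial.X + 1) =
      Polynomial.bernoulli m + Polynomial.C (m : ℚ) * Polynomial.X ^ (m - 1) := by
    apply Polynomial.funext
    intro r
    rw [Polynomial.eval_comp]
    simp only [Polynomial.eval_add, Polynomial.eval_X, Polynomial.eval_one, Polynomial.eval_mul,
      Polynomial.eval_C, Polynomial.eval_pow]
    rw [show r + 1 = 1 + r from by ring, Polynomial.bernoulli_eval_one_add m r]
  have h1 : bernoulliPoly m (x + 1)
      = Polynomial.aeval x ((Polynomial.bernoulli m).comp (Polynomial.X + 1)) := by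
    rw [Polynomial.aeval_comp]
    simp [bernoulliPoly]
  rw [h1, hq]
  simp [bernoulliPoly]

lemma bern_val_zero (m : ℕ) : bernoulliPoly m 0 = algebraMap ℚ ℂ (bernoulli m) := by
  rw [bernoulliPoly, show (0:ℂ) = algebraMap ℚ ℂ 0 from by simp, Polynomial.aeval_algebraMap_apply]
  simp [Polynomial.bernoulli_eval_zero]

lemma bern_val_one (m : ℕ) : bernoulliPoly m 1 = algebraMap ℚ ℂ (bernoulli' m) := by
  rw [bernoulliPoly, show (1:ℂ) = algebraMap ℚ ℂ 1 from by simp, Polynomial.aeval_algebraMap_apply]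
  simp [Polynomial.bernoulli_eval_one]

lemma bern_reflect (m : ℕ) (x : ℂ) :
    bernoulliPoly m (1 - x) = (-1)^m * bernoulliPoly m x := by
  set q := (bm m).comp (Polynomial.C 1 - Polynomial.X) - Polynomial.C ((-1:ℂ)^m) * bm m with hqdef
  have hev : ∀ t : ℂ, q.eval t = bernoulliPoly m (1 - t) - (-1)^m * bernoulliPoly m t := by
    intro t
    simp [hqdef, Polynomial.eval_comp, bernoulliPoly_eq_eval]
  have hper : ∀ t : ℂ, q.eval (t + 1) = q.eval t := by
    intro t
    rw [hev, hev]
    have e1 : (1 : ℂ) - (t + 1) = -t := by ring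
    have e2 : (1 : ℂ) - t = -t + 1 := by ring
    rw [e1, e2, bern_add_one m (-t), bern_add_one m t]
    rcases m with _ | m'
    · simp
    · have : (-t : ℂ)^(m'+1-1) = (-1)^m' * t^m' := by
        rw [show m'+1-1 = m' from rfl, neg_pow]
      rw [this, show m'+1-1 = m' from rfl]
      rw [pow_succ]
      push_cast
      ring
  have h0 : q.eval 0 = 0 := by
    rw [hev, sub_zero, bern_val_one, bern_val_zero]
    rw [show _root_.bernoulli' m = (-1:ℚ)^m * _root_.bernoulli m from by
      rw [_root_.bernoulli, ← mul_assoc, ← pow_add, Even.neg_one_pow ⟨m, by ring⟩, one_mul]]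
    push_cast
    ring
  have := const_of_periodic q hper (1-x) 0
  have hx := const_of_periodic q hper x 0
  -- q.eval x = q.eval 0 = 0 gives result... but we need hev at x
  have : q.eval x = 0 := by rw [hx, h0]
  rw [hev x] at this
  -- this : bernoulliPoly m (1-x) - (-1)^m * bernoulliPoly m x = 0
  linear_combination this

lemma even_sum (n : ℕ) (u : ℂ) :
    2 * ∑ k ∈ range (n+1), ((2*n+1).choose (2*k) : ℂ) * u^(2*k)
      = (1+u)^(2*n+1) + (1-u)^(2*n+1) := by
  have h1 : (1+u)^(2*n+1) = ∑ j ∈ range (2*n+2), u^j * ((2*n+1).choose j : ℂ) := by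
    have := add_pow u (1:ℂ) (2*n+1)
    simpa [show 2*n+1+1 = 2*n+2 from rfl, show (1:ℂ)+u = u+1 from by ring] using this
  have h2 : (1-u)^(2*n+1) = ∑ j ∈ range (2*n+2), (-u)^j * ((2*n+1).choose j : ℂ) := by
    have := add_pow (-u) (1:ℂ) (2*n+1)
    simpa [show 2*n+1+1 = 2*n+2 from rfl, show (1:ℂ)-u = -u+1 from by ring] using this
  rw [h1, h2, ← Finset.sum_add_distrib, _root_.sum_pair _ n, Finset.mul_sum]
  apply Finset.sum_congr rfl
  intro k _
  have e1 : (-u)^(2*k) = u^(2*k) := Even.neg_pow ⟨k, by ring⟩ u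
  have e2 : (-u)^(2*k+1) = -u^(2*k+1) := Odd.neg_pow ⟨k, by ring⟩ u
  rw [e1, e2]
  ring

lemma odd_minus_even (n : ℕ) (u : ℂ) :
    (∑ k ∈ range (n+1), ((2*n+1).choose (2*k+1) : ℂ) * u^(2*k+1))
      - ∑ k ∈ range (n+1), ((2*n+1).choose (2*k) : ℂ) * u^(2*k) = (u-1)^(2*n+1) := by
  have h2 : (1-u)^(2*n+1) = ∑ j ∈ range (2*n+2), (-u)^j * ((2*n+1).choose j : ℂ) := by
    have := add_pow (-u) (1:ℂ) (2*n+1)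
    simpa [show 2*n+1+1 = 2*n+2 from rfl, show (1:ℂ)-u = -u+1 from by ring] using this
  have h3 : (u-1)^(2*n+1) = -(1-u)^(2*n+1) := by
    rw [show (u-1 : ℂ) = -(1-u) from by ring, Odd.neg_pow ⟨n, by ring⟩]
  rw [h3, h2, _root_.sum_pair _ n, ← Finset.sum_sub_distrib, ← Finset.sum_neg_distrib]
  apply Finset.sum_congr rfl
  intro k _
  have e1 : (-u)^(2*k) = u^(2*k) := Even.neg_pow ⟨k, by ring⟩ u
  have e2 : (-u)^(2*k+1) = -u^(2*k+1) := Odd.neg_pow ⟨k, by ring⟩ u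
  rw [e1, e2]
  ring

lemma choose_id (n k : ℕ) (hk : k ≤ n) :
    ((2*n+1).choose (2*k+1) : ℂ) * (2*k+1) = ((2*n+1).choose (2*k) : ℂ) * (2*(n-k)+1) := by
  have h := Nat.choose_succ_right_eq (2*n+1) (2*k)
  have h2 : (2*n+1) - 2*k = 2*(n-k)+1 := by omega
  rw [h2] at h
  exact_mod_cast congrArg (Nat.cast : ℕ → ℂ) h

lemma identI (n : ℕ) (t : ℂ) :
    ∑ k ∈ range (n+1), (4:ℂ)^(2*k+1) * ((2*n+1).choose (2*k) : ℂ) * (t^(2*k) + (t+1/2)^(2*k))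
      = 2*((4*t+3)^(2*n+1) - (4*t-1)^(2*n+1)) := by
  have hbody : ∀ k ∈ range (n+1),
      (4:ℂ)^(2*k+1) * ((2*n+1).choose (2*k) : ℂ) * (t^(2*k) + (t+1/2)^(2*k))
      = 4*(((2*n+1).choose (2*k) : ℂ) * (4*t)^(2*k)) + 4*(((2*n+1).choose (2*k) : ℂ) * (4*t+2)^(2*k)) := by
    intro k _
    have p1 : (4*t)^(2*k) = 4^(2*k) * t^(2*k) := by rw [mul_pow]
    have p2 : (4*t+2)^(2*k) = 4^(2*k) * (t+1/2)^(2*k) := by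
      rw [show (4*t+2 : ℂ) = 4*(t+1/2) from by ring, mul_pow]
    rw [p1, p2, pow_succ]
    ring
  rw [Finset.sum_congr rfl hbody, Finset.sum_add_distrib, ← Finset.mul_sum, ← Finset.mul_sum]
  have e1 := even_sum n (4*t)
  have e2 := even_sum n (4*t+2)
  rw [show (1:ℂ)-(4*t+2) = -(1+4*t) from by ring, Odd.neg_pow ⟨n, by ring⟩] at e2
  rw [show (1:ℂ)-4*t = -(4*t-1) from by ring, Odd.neg_pow ⟨n, by ring⟩] at e1
  rw [show (1:ℂ)+(4*t+2) = 4*t+3 from by ring] at e2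
  linear_combination 2*e1 + 2*e2

lemma bern_pair (n : ℕ) (x : ℂ) :
    ∑ k ∈ range (n+1), (4 : ℂ) ^ (2 * k + 1) / (2 * (n - k : ℕ) + 1) *
        ((2 * n + 1).choose (2 * k + 1) : ℂ) *
        (bernoulliPoly (2*k+1) x + bernoulliPoly (2*k+1) (x+1/2))
    = 2*(4*x-1)^(2*n+1) := by
  set c : ℕ → ℂ := fun k => (4 : ℂ) ^ (2 * k + 1) / (2 * (n - k : ℕ) + 1) *
      ((2 * n + 1).choose (2 * k + 1) : ℂ) with hc
  set Nq : Polynomial ℂ :=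
    (∑ k ∈ range (n+1), Polynomial.C (c k) *
        (bm (2*k+1) + (bm (2*k+1)).comp (Polynomial.X + Polynomial.C (1/2))))
      - Polynomial.C 2 * (Polynomial.C 4 * Polynomial.X - 1)^(2*n+1) with hNq
  have hev : ∀ t : ℂ, Nq.eval t
      = (∑ k ∈ range (n+1), c k * (bernoulliPoly (2*k+1) t + bernoulliPoly (2*k+1) (t+1/2)))
        - 2*(4*t-1)^(2*n+1) := by
    intro t
    simp [hNq, Polynomial.eval_finset_sum, Polynomial.eval_comp, bernoulliPoly_eq_eval]
  have hcmul : ∀ k, k ∈ range (n+1) → c k * (2*(k:ℂ)+1) = (4:ℂ)^(2*k+1) * ((2*n+1).choose (2*k) : ℂ) := by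
    intro k hk
    have hkn : k ≤ n := by have := mem_range.mp hk; omega
    have hcast : ((n - k : ℕ) : ℂ) = (n:ℂ) - (k:ℂ) := by
      push_cast [Nat.cast_sub hkn]; ring
    have hd : (2*((n:ℂ)-(k:ℂ))+1) ≠ 0 := by
      have h1 : ((2*(n-k)+1 : ℕ) : ℂ) ≠ 0 := Nat.cast_ne_zero.mpr (by omega)
      have h2 : ((2*(n-k)+1 : ℕ) : ℂ) = 2*((n:ℂ)-(k:ℂ))+1 := by
        push_cast [Nat.cast_sub hkn]; ring
      rw [h2] at h1; exact h1
    rw [hc]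
    simp only
    rw [hcast, div_mul_eq_mul_div, div_mul_eq_mul_div, div_eq_iff hd]
    have := choose_id n k hkn
    linear_combination (4:ℂ)^(2*k+1) * this
  have hper : ∀ t : ℂ, Nq.eval (t+1) = Nq.eval t := by
    intro t
    rw [hev, hev]
    have hbody : ∀ k ∈ range (n+1),
        c k * (bernoulliPoly (2*k+1) (t+1) + bernoulliPoly (2*k+1) (t+1+1/2))
        = c k * (bernoulliPoly (2*k+1) t + bernoulliPoly (2*k+1) (t+1/2))
          + (4:ℂ)^(2*k+1) * ((2*n+1).choose (2*k) : ℂ) * (t^(2*k) + (t+1/2)^(2*k)) := by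
      intro k hk
      have h1 := bern_add_one (2*k+1) t
      have h2 := bern_add_one (2*k+1) (t+1/2)
      rw [show t+1+1/2 = (t+1/2)+1 from by ring, h2, h1]
      rw [show 2*k+1-1 = 2*k from rfl] at *
      have hcm := hcmul k hk
      push_cast
      linear_combination (t^(2*k) + (t+1/2)^(2*k)) * hcm
    rw [Finset.sum_congr rfl hbody, Finset.sum_add_distrib, identI n t]
    ring_nf
  have hpin : Nq.eval (1/4 : ℂ) = 0 := by
    rw [hev]
    have hz : ∀ k ∈ range (n+1),
        c k * (bernoulliPoly (2*k+1) (1/4) + bernoulliPoly (2*k+1) (1/4+1/2)) = 0 := by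
      intro k _
      rw [show (1/4 : ℂ)+1/2 = 1 - 1/4 from by norm_num, bern_reflect]
      rw [Odd.neg_one_pow ⟨k, by ring⟩]
      ring
    rw [Finset.sum_eq_zero hz]
    rw [show 4*(1/4 : ℂ)-1 = 0 from by norm_num, zero_pow (by omega : 2*n+1 ≠ 0)]
    ring
  have hx := const_of_periodic Nq hper x (1/4)
  rw [hpin] at hx
  rw [hev x] at hx
  linear_combination hx

lemma euler_pair (n : ℕ) (x : ℂ) :
    ((∑ k ∈ range (n+1), (2:ℂ)^(2*k+1) * ((2*n+1).choose (2*k+1) : ℂ) * eulerPoly (2*k+1) (2*x))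
      - ∑ k ∈ range (n+1), (2:ℂ)^(2*k) * ((2*n+1).choose (2*k) : ℂ) * eulerPoly (2*k) (2*x))
    + ((∑ k ∈ range (n+1), (2:ℂ)^(2*k+1) * ((2*n+1).choose (2*k+1) : ℂ) * eulerPoly (2*k+1) (2*(x+1/2)))
      - ∑ k ∈ range (n+1), (2:ℂ)^(2*k) * ((2*n+1).choose (2*k) : ℂ) * eulerPoly (2*k) (2*(x+1/2)))
    = 2*(4*x-1)^(2*n+1) := by
  rw [show 2*(x+1/2) = 2*x+1 from by ring]
  rw [show ∀ A B C D : ℂ, (A - B) + (C - D) = (A + C) - (B + D) from by intros; ring]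
  rw [← Finset.sum_add_distrib, ← Finset.sum_add_distrib]
  have hodd : ∀ k ∈ range (n+1),
      (2:ℂ)^(2*k+1) * ((2*n+1).choose (2*k+1) : ℂ) * eulerPoly (2*k+1) (2*x)
        + (2:ℂ)^(2*k+1) * ((2*n+1).choose (2*k+1) : ℂ) * eulerPoly (2*k+1) (2*x+1)
      = 2 * (((2*n+1).choose (2*k+1) : ℂ) * (4*x)^(2*k+1)) := by
    intro k _
    have hfe := euler_fe (2*k+1) (2*x)
    have hp : (2:ℂ)^(2*k+1) * (2*x)^(2*k+1) = (4*x)^(2*k+1) := by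
      rw [← mul_pow, show (2:ℂ)*(2*x) = 4*x from by ring]
    linear_combination (2:ℂ)^(2*k+1) * ((2*n+1).choose (2*k+1) : ℂ) * hfe
      + 2 * ((2*n+1).choose (2*k+1) : ℂ) * hp
  have heven : ∀ k ∈ range (n+1),
      (2:ℂ)^(2*k) * ((2*n+1).choose (2*k) : ℂ) * eulerPoly (2*k) (2*x)
        + (2:ℂ)^(2*k) * ((2*n+1).choose (2*k) : ℂ) * eulerPoly (2*k) (2*x+1)
      = 2 * (((2*n+1).choose (2*k) : ℂ) * (4*x)^(2*k)) := by
    intro k _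
    have hfe := euler_fe (2*k) (2*x)
    have hp : (2:ℂ)^(2*k) * (2*x)^(2*k) = (4*x)^(2*k) := by
      rw [← mul_pow, show (2:ℂ)*(2*x) = 4*x from by ring]
    linear_combination (2:ℂ)^(2*k) * ((2*n+1).choose (2*k) : ℂ) * hfe
      + 2 * ((2*n+1).choose (2*k) : ℂ) * hp
  rw [Finset.sum_congr rfl hodd, Finset.sum_congr rfl heven, ← Finset.mul_sum, ← Finset.mul_sum]
  have hoe := odd_minus_even n (4*x)
  linear_combination 2 * hoe

noncomputable def emPC (m : ℕ) : Polynomial ℂ :=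
  ∑ k ∈ range (m+1), Polynomial.C ((1:ℂ)/2^k) *
    ∑ j ∈ range (k+1), Polynomial.C ((-1:ℂ)^j * (k.choose j : ℂ)) * (Polynomial.X + Polynomial.C (j:ℂ))^m

lemma euler_eq_eval (m : ℕ) (x : ℂ) : eulerPoly m x = (emPC m).eval x := by
  rw [eulerPoly, emPC, Polynomial.eval_finset_sum]
  apply Finset.sum_congr rfl
  intro k _
  rw [Polynomial.eval_mul, Polynomial.eval_C, Polynomial.eval_finset_sum]
  congr 1
  apply Finset.sum_congr rfl
  intro j _
  simp [mul_assoc]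

theorem stmt9 (n : ℕ) (z : ℂ) :
    ∑ k ∈ range (n + 1), (4 : ℂ) ^ (2 * k + 1) / (2 * (n - k : ℕ) + 1) *
        ((2 * n + 1).choose (2 * k + 1) : ℂ) * bernoulliPoly (2 * k + 1) z
      = ∑ k ∈ range (n + 1), (2 : ℂ) ^ (2 * k + 1) *
          ((2 * n + 1).choose (2 * k + 1) : ℂ) * eulerPoly (2 * k + 1) (2 * z)
        - ∑ k ∈ range (n + 1), (2 : ℂ) ^ (2 * k) *
          ((2 * n + 1).choose (2 * k) : ℂ) * eulerPoly (2 * k) (2 * z) := by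
  set qD : Polynomial ℂ :=
    (∑ k ∈ range (n+1), Polynomial.C ((4 : ℂ) ^ (2 * k + 1) / (2 * (n - k : ℕ) + 1) *
        ((2 * n + 1).choose (2 * k + 1) : ℂ)) * bm (2*k+1))
    - ((∑ k ∈ range (n+1), Polynomial.C ((2:ℂ)^(2*k+1) * ((2*n+1).choose (2*k+1) : ℂ)) *
          (emPC (2*k+1)).comp (Polynomial.C 2 * Polynomial.X))
      - (∑ k ∈ range (n+1), Polynomial.C ((2:ℂ)^(2*k) * ((2*n+1).choose (2*k) : ℂ)) *
          (emPC (2*k)).comp (Polynomial.C 2 * Polynomial.X))) with hqD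
  have hev : ∀ t : ℂ, qD.eval t
      = (∑ k ∈ range (n + 1), (4 : ℂ) ^ (2 * k + 1) / (2 * (n - k : ℕ) + 1) *
            ((2 * n + 1).choose (2 * k + 1) : ℂ) * bernoulliPoly (2 * k + 1) t)
        - ((∑ k ∈ range (n + 1), (2 : ℂ) ^ (2 * k + 1) *
              ((2 * n + 1).choose (2 * k + 1) : ℂ) * eulerPoly (2 * k + 1) (2 * t))
          - ∑ k ∈ range (n + 1), (2 : ℂ) ^ (2 * k) *
              ((2 * n + 1).choose (2 * k) : ℂ) * eulerPoly (2 * k) (2 * t)) := by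
    intro t
    simp [hqD, Polynomial.eval_finset_sum, Polynomial.eval_comp, bernoulliPoly_eq_eval,
      euler_eq_eval, mul_assoc]
  have hpair : ∀ t : ℂ, qD.eval t + qD.eval (t+1/2) = 0 := by
    intro t
    rw [hev, hev]
    have hb := bern_pair n t
    have hsplit : ∑ k ∈ range (n+1), (4 : ℂ) ^ (2 * k + 1) / (2 * (n - k : ℕ) + 1) *
          ((2 * n + 1).choose (2 * k + 1) : ℂ) *
          (bernoulliPoly (2*k+1) t + bernoulliPoly (2*k+1) (t+1/2))
        = (∑ k ∈ range (n+1), (4 : ℂ) ^ (2 * k + 1) / (2 * (n - k : ℕ) + 1) *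
            ((2 * n + 1).choose (2 * k + 1) : ℂ) * bernoulliPoly (2*k+1) t)
          + ∑ k ∈ range (n+1), (4 : ℂ) ^ (2 * k + 1) / (2 * (n - k : ℕ) + 1) *
            ((2 * n + 1).choose (2 * k + 1) : ℂ) * bernoulliPoly (2*k+1) (t+1/2) := by
      rw [← Finset.sum_add_distrib]
      apply Finset.sum_congr rfl
      intro k _
      ring
    rw [hsplit] at hb
    have he := euler_pair n t
    linear_combination hb - he
  have hper : ∀ t : ℂ, qD.eval (t+1) = qD.eval t := by
    intro t
    have h1 := hpair t
    have h2 := hpair (t+1/2)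
    rw [show t+1/2+1/2 = t+1 from by ring] at h2
    linear_combination h2 - h1
  have hc := const_of_periodic qD hper
  have h0 : qD.eval 0 = 0 := by
    have h1 := hpair 0
    have h2 := hc (0+1/2) 0
    rw [h2] at h1
    linear_combination h1 / 2
  have hz : qD.eval z = 0 := by rw [hc z 0, h0]
  rw [hev z] at hz
  linear_combination hz
end

section
/- For every nonnegative integer n and every complex number z, ∑_{k=0}^{n} C(2n,2k) · B_{2k}(3z) − ∑_{k=0}^{n-1} C(2n,2k+1) · B_{2k+1}(3z) = 2·∑_{k=0}^{n-1} 3^{2k-1} · C(2n,2k) · B_{2k}(z) + 3^{2n} · B_{2n}(z), where C(n,k) denotes the binomial coefficient. -/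
open Finset

lemma bernoulliPoly_def (n : ℕ) (z : ℂ) :
    bernoulliPoly n z = ∑ i ∈ range (n + 1),
      ((bernoulli i : ℚ) : ℂ) * (n.choose i : ℂ) * z ^ (n - i) := by
  unfold bernoulliPoly
  rw [Polynomial.bernoulli, map_sum]
  refine Finset.sum_congr rfl fun i _ => ?_
  rw [Polynomial.aeval_monomial, eq_ratCast]
  push_cast
  ring

lemma sum_range_even_odd (g : ℕ → ℂ) (n : ℕ) :
    ∑ j ∈ range (2 * n + 1), g j
      = ∑ k ∈ range (n + 1), g (2 * k) + ∑ k ∈ range n, g (2 * k + 1) := by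
  induction n with
  | zero => simp
  | succ n ih =>
      have h2 : 2 * (n + 1) + 1 = (2 * n + 1) + 1 + 1 := by ring
      rw [h2, sum_range_succ, sum_range_succ, ih,
        sum_range_succ (fun k => g (2 * k)) (n + 1),
        sum_range_succ (fun k => g (2 * k + 1)) n]
      have e1 : 2 * n + 1 + 1 = 2 * (n + 1) := by ring
      rw [e1]
      ring

lemma bernoulliPoly_add (m : ℕ) (x y : ℂ) :
    bernoulliPoly m (x + y)
      = ∑ k ∈ range (m + 1), (m.choose k : ℂ) * bernoulliPoly k x * y ^ (m - k) := by
  have lhs_eq : bernoulliPoly m (x + y)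
      = ∑ i ∈ range (m + 1), ∑ j ∈ range (m - i + 1),
          ((bernoulli i : ℚ) : ℂ) * ((m.choose i : ℂ) * (((m - i).choose j : ℂ)))
            * x ^ j * y ^ (m - i - j) := by
    rw [bernoulliPoly_def]
    refine sum_congr rfl fun i _ => ?_
    rw [add_pow, Finset.mul_sum]
    refine sum_congr rfl fun j _ => ?_
    ring
  have rhs_eq : ∑ k ∈ range (m + 1), (m.choose k : ℂ) * bernoulliPoly k x * y ^ (m - k)
      = ∑ k ∈ range (m + 1), ∑ i ∈ range (k + 1),
          ((bernoulli i : ℚ) : ℂ) * ((m.choose k : ℂ) * ((k.choose i : ℂ)))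
            * x ^ (k - i) * y ^ (m - k) := by
    refine sum_congr rfl fun k _ => ?_
    rw [bernoulliPoly_def, Finset.mul_sum, Finset.sum_mul]
    refine sum_congr rfl fun i _ => ?_
    ring
  rw [lhs_eq, rhs_eq, Finset.sum_sigma', Finset.sum_sigma']
  refine Finset.sum_nbij' (fun p => ⟨p.1 + p.2, p.1⟩) (fun q => ⟨q.2, q.1 - q.2⟩)
    ?_ ?_ ?_ ?_ ?_
  · rintro ⟨i, j⟩ hp
    simp only [Finset.mem_sigma, Finset.mem_range] at hp ⊢
    omega
  · rintro ⟨k, i⟩ hq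
    simp only [Finset.mem_sigma, Finset.mem_range] at hq ⊢
    omega
  · rintro ⟨i, j⟩ hp
    simp
  · rintro ⟨k, i⟩ hq
    simp only [Finset.mem_sigma, Finset.mem_range] at hq
    have h : i + (k - i) = k := by omega
    simp [h]
  · rintro ⟨i, j⟩ hp
    simp only [Finset.mem_sigma, Finset.mem_range] at hp
    have hij : i + j ≤ m := by omega
    have hchoose : m.choose (i + j) * (i + j).choose i = m.choose i * (m - i).choose j := by
      have h2 := Nat.choose_mul (n := m) (Nat.le_add_right i j)
      rwa [Nat.add_sub_cancel_left] at h2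
    have hc : (m.choose (i + j) : ℂ) * ((i + j).choose i : ℂ)
        = (m.choose i : ℂ) * ((m - i).choose j : ℂ) := by exact_mod_cast congrArg Nat.cast hchoose
    have he : m - i - j = m - (i + j) := by omega
    simp only [Nat.add_sub_cancel_left]
    rw [he, ← hc]

lemma poly_const_of_periodic (p : Polynomial ℚ) (c : ℚ) (hc : c ≠ 0)
    (h : ∀ x : ℚ, p.eval (x + c) = p.eval x) : p = Polynomial.C (p.eval 0) := by
  set q := p - Polynomial.C (p.eval 0) with hq
  have hq0 : ∀ x : ℚ, q.eval (x + c) = q.eval x := by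
    intro x; simp [hq, h x]
  have hk : ∀ k : ℕ, q.eval (k * c) = 0 := by
    intro k
    induction k with
    | zero => simp [hq]
    | succ k ih =>
        have : ((k : ℚ) + 1) * c = k * c + c := by ring
        rw [Nat.cast_succ, this, hq0, ih]
  have hzero : q = 0 := by
    apply Polynomial.eq_zero_of_infinite_isRoot
    apply Set.infinite_of_injective_forall_mem
      (f := fun k : ℕ => (k : ℚ) * c)
    · intro a b hab
      simp only [mul_eq_mul_right_iff, Nat.cast_inj, hc, or_false] at hab
      exact hab
    · intro k
      exact hk k
  rw [hq] at hzero
  exact sub_eq_zero.mp hzero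

noncomputable def Dpoly (m : ℕ) : Polynomial ℚ :=
  Polynomial.C 3 * (Polynomial.bernoulli m).comp (Polynomial.C 3 * Polynomial.X)
    - Polynomial.C (3 ^ m) *
        ∑ j ∈ range 3, (Polynomial.bernoulli m).comp (Polynomial.X + Polynomial.C ((j : ℚ) / 3))

lemma pow_helper {K : Type*} [Field K] (m : ℕ) (x : K) :
    (m : K) * (3 * (3 * x) ^ (m - 1)) = (m : K) * (3 ^ m * x ^ (m - 1)) := by
  cases m with
  | zero => simp
  | succ m => simp only [Nat.add_sub_cancel, mul_pow, pow_succ]; ring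

lemma Dpoly_eval_periodic (m : ℕ) (x : ℚ) :
    (Dpoly m).eval (x + 1 / 3) = (Dpoly m).eval x := by
  simp only [Dpoly, Polynomial.eval_sub, Polynomial.eval_mul, Polynomial.eval_C,
    Polynomial.eval_comp, Polynomial.eval_add, Polynomial.eval_X, Polynomial.eval_finset_sum, Polynomial.eval_zero,
    Finset.sum_range_succ, Finset.sum_range_zero]
  push_cast
  have e1 : (3 : ℚ) * (x + 1 / 3) = 1 + 3 * x := by ring
  have e2 : x + 1 / 3 + 2 / 3 = 1 + x := by ring
  rw [e1, e2, Polynomial.bernoulli_eval_one_add, Polynomial.bernoulli_eval_one_add]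
  have e3 : x + 1 / 3 + 0 / 3 = x + 1 / 3 := by ring
  have e4 : x + 1 / 3 + 1 / 3 = x + 2 / 3 := by ring
  have e5 : x + 0 / 3 = x := by ring
  have e6 : x + 1/3 = x + 1/3 := rfl
  rw [e3, e4, e5]
  have key := pow_helper (K := ℚ) m x
  linarith [key]

lemma derivative_Dpoly (m : ℕ) :
    Polynomial.derivative (Dpoly (m + 1)) = Polynomial.C ((3 : ℚ) * (m + 1)) * Dpoly m := by
  unfold Dpoly
  rw [Polynomial.derivative_sub, Polynomial.derivative_mul, Polynomial.derivative_C,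
    Polynomial.derivative_comp, Polynomial.derivative_bernoulli_add_one,
    Polynomial.derivative_mul, Polynomial.derivative_C, Polynomial.derivative_X,
    Polynomial.derivative_mul, Polynomial.derivative_C]
  rw [Polynomial.derivative_sum]
  have hsum : ∑ j ∈ range 3, Polynomial.derivative
        ((Polynomial.bernoulli (m + 1)).comp (Polynomial.X + Polynomial.C ((j : ℚ) / 3)))
      = Polynomial.C ((m : ℚ) + 1) * ∑ j ∈ range 3,
          (Polynomial.bernoulli m).comp (Polynomial.X + Polynomial.C ((j : ℚ) / 3)) := by
    rw [Finset.mul_sum]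
    refine sum_congr rfl fun j _ => ?_
    rw [Polynomial.derivative_comp, Polynomial.derivative_bernoulli_add_one,
      Polynomial.derivative_add, Polynomial.derivative_X, Polynomial.derivative_C,
      Polynomial.mul_comp]
    simp only [Polynomial.add_comp, Polynomial.natCast_comp, Polynomial.one_comp,
      map_add, map_one, map_natCast]
    ring
  rw [hsum, Polynomial.mul_comp]
  simp only [Polynomial.add_comp, Polynomial.natCast_comp, Polynomial.one_comp,
    map_add, map_one, map_mul, map_pow, map_natCast, map_ofNat]
  ring

lemma Dpoly_zero (m : ℕ) : Dpoly m = 0 := by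
  have hconst : Dpoly (m + 1) = Polynomial.C ((Dpoly (m + 1)).eval 0) :=
    poly_const_of_periodic _ (1 / 3) (by norm_num) (Dpoly_eval_periodic (m + 1))
  have hd : Polynomial.derivative (Dpoly (m + 1)) = 0 := by
    rw [hconst]; simp
  rw [derivative_Dpoly] at hd
  rcases mul_eq_zero.mp hd with h | h
  · exfalso
    rw [Polynomial.C_eq_zero] at h
    have : (0 : ℚ) < 3 * (m + 1) := by positivity
    linarith [this, h.ge]
  · exact h

lemma bernoulliPoly_mult3 (m : ℕ) (z : ℂ) :
    3 * bernoulliPoly m (3 * z)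
      = 3 ^ m * ∑ j ∈ range 3, bernoulliPoly m (z + (j : ℂ) / 3) := by
  have h0 := congrArg (Polynomial.aeval z) (Dpoly_zero m)
  rw [Dpoly] at h0
  simp only [map_sub, map_mul, map_sum, Polynomial.aeval_comp, map_add, map_pow,
    Polynomial.aeval_X, Polynomial.aeval_C, map_zero] at h0
  simp only [eq_ratCast] at h0
  push_cast at h0
  unfold bernoulliPoly
  linear_combination h0

lemma neg_one_pow_even (k : ℕ) : (-1 : ℂ) ^ (2 * k) = 1 := by
  rw [pow_mul]; norm_num

theorem stmt10 (n : ℕ) (z : ℂ) :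
    ∑ k ∈ range (n + 1), ((2 * n).choose (2 * k) : ℂ) * bernoulliPoly (2 * k) (3 * z)
      - ∑ k ∈ range n, ((2 * n).choose (2 * k + 1) : ℂ) * bernoulliPoly (2 * k + 1) (3 * z)
      = 2 * ∑ k ∈ range n, (3 : ℂ) ^ (2 * (k : ℤ) - 1) *
          ((2 * n).choose (2 * k) : ℂ) * bernoulliPoly (2 * k) z
        + 3 ^ (2 * n) * bernoulliPoly (2 * n) z := by
  -- Step 1 : LHS = B_{2n}(3z - 1)
  have h1 : bernoulliPoly (2 * n) (3 * z + (-1))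
      = ∑ k ∈ range (n + 1), ((2 * n).choose (2 * k) : ℂ) * bernoulliPoly (2 * k) (3 * z)
        - ∑ k ∈ range n, ((2 * n).choose (2 * k + 1) : ℂ) * bernoulliPoly (2 * k + 1) (3 * z) := by
    rw [bernoulliPoly_add]
    calc ∑ k ∈ range (2 * n + 1),
          ((2 * n).choose k : ℂ) * bernoulliPoly k (3 * z) * (-1) ^ (2 * n - k)
        = ∑ k ∈ range (2 * n + 1),
            (-1 : ℂ) ^ k * ((2 * n).choose k : ℂ) * bernoulliPoly k (3 * z) := by
          refine sum_congr rfl fun k hk => ?_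
          have hk' : k ≤ 2 * n := by
            have := mem_range.mp hk; omega
          have hA : (-1 : ℂ) ^ (2 * n - k) * (-1) ^ k = 1 := by
            rw [← pow_add, show 2 * n - k + k = 2 * n by omega]; exact neg_one_pow_even n
          have hB : (-1 : ℂ) ^ k * (-1) ^ k = 1 := by
            rw [← pow_add, ← two_mul]; exact neg_one_pow_even k
          have hsign : (-1 : ℂ) ^ (2 * n - k) = (-1) ^ k :=
            mul_right_cancel₀ (pow_ne_zero k (by norm_num)) (hA.trans hB.symm)
          rw [hsign]; ring
      _ = ∑ k ∈ range (n + 1),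
            (-1 : ℂ) ^ (2 * k) * ((2 * n).choose (2 * k) : ℂ) * bernoulliPoly (2 * k) (3 * z)
          + ∑ k ∈ range n,
            (-1 : ℂ) ^ (2 * k + 1) * ((2 * n).choose (2 * k + 1) : ℂ)
              * bernoulliPoly (2 * k + 1) (3 * z) :=
          sum_range_even_odd
            (fun j => (-1 : ℂ) ^ j * ((2 * n).choose j : ℂ) * bernoulliPoly j (3 * z)) n
      _ = ∑ k ∈ range (n + 1), ((2 * n).choose (2 * k) : ℂ) * bernoulliPoly (2 * k) (3 * z)
          - ∑ k ∈ range n,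
              ((2 * n).choose (2 * k + 1) : ℂ) * bernoulliPoly (2 * k + 1) (3 * z) := by
          rw [sub_eq_add_neg, ← Finset.sum_neg_distrib]
          congr 1
          · refine sum_congr rfl fun k _ => ?_
            rw [neg_one_pow_even k]; ring
          · refine sum_congr rfl fun k _ => ?_
            rw [pow_succ, neg_one_pow_even k]; ring
  -- Step 2 : multiplication theorem at z - 1/3
  have h2 : 3 * bernoulliPoly (2 * n) (3 * z + (-1))
      = 3 ^ (2 * n) * (bernoulliPoly (2 * n) (z - 1 / 3) + bernoulliPoly (2 * n) z
          + bernoulliPoly (2 * n) (z + 1 / 3)) := by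
    have hm := bernoulliPoly_mult3 (2 * n) (z - 1 / 3)
    simp only [Finset.sum_range_succ, Finset.sum_range_zero] at hm
    push_cast at hm
    rw [show (3 : ℂ) * (z - 1 / 3) = 3 * z + (-1) by ring,
      show z - 1 / 3 + 0 / 3 = z - 1 / 3 by ring,
      show z - 1 / 3 + 1 / 3 = z by ring,
      show z - 1 / 3 + 2 / 3 = z + 1 / 3 by ring] at hm
    rw [hm]; ring
  -- Step 3 : sum of the two shifted values
  have h3 : bernoulliPoly (2 * n) (z + 1 / 3) + bernoulliPoly (2 * n) (z - 1 / 3)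
      = ∑ k ∈ range (n + 1), 2 * ((2 * n).choose (2 * k) : ℂ) * bernoulliPoly (2 * k) z
          * (1 / 3) ^ (2 * n - 2 * k) := by
    have e1 := bernoulliPoly_add (2 * n) z (1 / 3)
    have e2 := bernoulliPoly_add (2 * n) z (-(1 / 3))
    rw [show z + -(1 / 3 : ℂ) = z - 1 / 3 by ring] at e2
    rw [e1, e2, ← Finset.sum_add_distrib]
    calc ∑ k ∈ range (2 * n + 1),
          (((2 * n).choose k : ℂ) * bernoulliPoly k z * (1 / 3) ^ (2 * n - k)
            + ((2 * n).choose k : ℂ) * bernoulliPoly k z * (-(1 / 3)) ^ (2 * n - k))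
        = ∑ k ∈ range (n + 1),
            (((2 * n).choose (2 * k) : ℂ) * bernoulliPoly (2 * k) z
                * (1 / 3) ^ (2 * n - 2 * k)
              + ((2 * n).choose (2 * k) : ℂ) * bernoulliPoly (2 * k) z
                * (-(1 / 3)) ^ (2 * n - 2 * k))
          + ∑ k ∈ range n,
            (((2 * n).choose (2 * k + 1) : ℂ) * bernoulliPoly (2 * k + 1) z
                * (1 / 3) ^ (2 * n - (2 * k + 1))
              + ((2 * n).choose (2 * k + 1) : ℂ) * bernoulliPoly (2 * k + 1) z
                * (-(1 / 3)) ^ (2 * n - (2 * k + 1))) :=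
          sum_range_even_odd _ n
      _ = ∑ k ∈ range (n + 1), 2 * ((2 * n).choose (2 * k) : ℂ) * bernoulliPoly (2 * k) z
            * (1 / 3) ^ (2 * n - 2 * k) + 0 := by
          congr 1
          · refine sum_congr rfl fun k hk => ?_
            have hk' : k ≤ n := by have := mem_range.mp hk; omega
            have he : 2 * n - 2 * k = 2 * (n - k) := by omega
            rw [he, show (-(1/3) : ℂ) ^ (2 * (n - k)) = (1/3) ^ (2 * (n-k)) by
              rw [neg_pow, neg_one_pow_even, one_mul]]
            ring
          · refine sum_eq_zero fun k hk => ?_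
            have hk' : k < n := mem_range.mp hk
            have he : 2 * n - (2 * k + 1) = 2 * (n - k - 1) + 1 := by omega
            rw [he, pow_succ, pow_succ,
              show (-(1/3) : ℂ) ^ (2 * (n - k - 1)) = (1/3) ^ (2 * (n-k-1)) by
                rw [neg_pow, neg_one_pow_even, one_mul]]
            ring
      _ = _ := by rw [add_zero]
  -- Step 4 : power bookkeeping
  have key : ∀ k : ℕ, k ≤ n →
      (3 : ℂ) ^ (2 * n) * (1 / 3) ^ (2 * n - 2 * k) = 3 * 3 ^ (2 * (k : ℤ) - 1) := by
    intro k hk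
    have hz : (3 : ℂ) ^ (2 * (k : ℤ) - 1) = 3 ^ (2 * k) / 3 := by
      rw [zpow_sub₀ (by norm_num : (3 : ℂ) ≠ 0),
        show (2 * (k : ℤ)) = ((2 * k : ℕ) : ℤ) by push_cast; ring, zpow_natCast, zpow_one]
    rw [hz, div_pow, one_pow, mul_one_div,
      div_eq_iff (pow_ne_zero _ (by norm_num : (3:ℂ) ≠ 0)), mul_comm 3,
      div_mul_cancel₀ _ (by norm_num : (3:ℂ) ≠ 0), ← pow_add]
    congr 1
    omega
  -- Final assembly
  rw [← h1]
  apply mul_left_cancel₀ (show (3 : ℂ) ≠ 0 by norm_num)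
  rw [h2]
  have hs : 3 ^ (2 * n) * (bernoulliPoly (2 * n) (z + 1 / 3) + bernoulliPoly (2 * n) (z - 1/3))
      = 3 * (2 * ∑ k ∈ range n, (3 : ℂ) ^ (2 * (k : ℤ) - 1) *
          ((2 * n).choose (2 * k) : ℂ) * bernoulliPoly (2 * k) z)
        + 2 * 3 ^ (2 * n) * bernoulliPoly (2 * n) z := by
    have hsum : ∑ k ∈ range n, (3 : ℂ) ^ (2 * n) *
          (2 * ((2 * n).choose (2 * k) : ℂ) * bernoulliPoly (2 * k) z
            * (1 / 3) ^ (2 * n - 2 * k))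
        = ∑ k ∈ range n, 3 * (2 * ((3 : ℂ) ^ (2 * (k : ℤ) - 1) *
            ((2 * n).choose (2 * k) : ℂ) * bernoulliPoly (2 * k) z)) := by
      refine sum_congr rfl fun k hk => ?_
      have hk' : k ≤ n := le_of_lt (mem_range.mp hk)
      linear_combination 2 * ((2 * n).choose (2 * k) : ℂ) * bernoulliPoly (2 * k) z
        * key k hk'
    rw [h3, Finset.sum_range_succ, Nat.choose_self, Nat.sub_self, mul_add,
      Finset.mul_sum, hsum]
    conv_rhs => rw [Finset.mul_sum, Finset.mul_sum]
    push_cast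
    ring
  linear_combination hs
end

section
/- For every positive integer n and every complex number z, ∑_{k=1}^{n} (-1)^k · 2^{2k+1} · (2k-1) · C(4n-2,4k-2) · E_{4k-3}(z) = ∑_{k=1}^{n-1} (-1)^k · 2^{2k+1} · C(4n-2,4k-1) · B_{4k-1}(z) + ∑_{k=1}^{n} (-1)^k · 2^{2k} · C(4n-2,4k-3) · B_{4k-3}(z), where C(n,k) denotes the binomial coefficient. -/
open Finset

namespace Stmt13Aux
open PowerSeries Nat

noncomputable def Φ (t : ℂ) : ℂ⟦X⟧ :=
  PowerSeries.mk fun n => Polynomial.aeval t ((1 / n ! : ℚ) • Polynomial.bernoulli n)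

lemma coeff_Φ (t : ℂ) (n : ℕ) :
    coeff n (Φ t) = (1 / (n ! : ℂ)) * bernoulliPoly n t := by
  simp [Φ, bernoulliPoly, Algebra.smul_def]

lemma Φ_gf (t : ℂ) : Φ t * (exp ℂ - 1) = X * rescale t (exp ℂ) :=
  Polynomial.bernoulli_generating_function t

lemma exp_sub_one_ne : (exp ℂ - 1 : ℂ⟦X⟧) ≠ 0 := by
  intro h
  have := congrArg (coeff 1) h
  simp [coeff_exp] at this

lemma Φ_add (x y : ℂ) : Φ (x + y) = Φ x * rescale y (exp ℂ) := by
  apply mul_right_cancel₀ exp_sub_one_ne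
  rw [Φ_gf, mul_right_comm, Φ_gf, mul_assoc, exp_mul_exp_eq_exp_add]

lemma fact_cast_ne (m : ℕ) : ((m ! : ℂ)) ≠ 0 := by
  exact_mod_cast Nat.cast_ne_zero.mpr (factorial_ne_zero m)

lemma bp_add (n : ℕ) (x y : ℂ) :
    bernoulliPoly n (x + y)
      = ∑ j ∈ range (n + 1), (n.choose j : ℂ) * bernoulliPoly j x * y ^ (n - j) := by
  have h := congrArg (coeff n) (Φ_add x y)
  rw [coeff_Φ, PowerSeries.coeff_mul, Nat.sum_antidiagonal_eq_sum_range_succ_mk] at h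
  have h2 : (1 / (n ! : ℂ)) * bernoulliPoly n (x + y)
      = ∑ j ∈ range (n + 1), (1 / (j ! : ℂ)) * bernoulliPoly j x * (y ^ (n - j) * (1 / ((n - j)! : ℂ))) := by
    rw [h]
    refine Finset.sum_congr rfl fun j hj => ?_
    rw [coeff_Φ, coeff_rescale, coeff_exp]
    push_cast
    ring
  have h3 := congrArg (fun w => (n ! : ℂ) * w) h2
  rw [← mul_assoc, mul_one_div_cancel (fact_cast_ne n), one_mul, Finset.mul_sum] at h3
  rw [h3]
  refine Finset.sum_congr rfl fun j hj => ?_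
  have hj' : j ≤ n := by simpa [Nat.lt_succ_iff] using mem_range.mp hj
  have hc : ((n.choose j : ℕ) : ℂ) * (j ! : ℂ) * (((n - j)! : ℕ) : ℂ) = ((n ! : ℕ) : ℂ) := by
    exact_mod_cast congrArg (Nat.cast : ℕ → ℂ) (Nat.choose_mul_factorial_mul_factorial hj')
  have hjne : (j ! : ℂ) ≠ 0 := fact_cast_ne j
  have hnjne : (((n - j)! : ℕ) : ℂ) ≠ 0 := fact_cast_ne (n - j)
  field_simp
  linear_combination (-(bernoulliPoly j x * y ^ (n - j))) * hc

lemma rescale_two_exp : rescale (2 : ℂ) (exp ℂ) = exp ℂ * exp ℂ := by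
  have := exp_mul_exp_eq_exp_add (1 : ℂ) 1
  norm_num [rescale_one] at this
  rw [this]

lemma hne2 : (rescale (2 : ℂ) (exp ℂ) - 1 : ℂ⟦X⟧) ≠ 0 := by
  intro h
  have := congrArg (coeff 1) h
  simp [coeff_rescale, coeff_exp] at this

lemma two_eq_C : (2 : ℂ⟦X⟧) = C 2 := by
  rw [map_ofNat]

lemma Φ_dup (t : ℂ) :
    (2 : ℂ⟦X⟧) * Φ (2 * t) = rescale 2 (Φ t) + rescale 2 (Φ (t + 1/2)) := by
  apply mul_right_cancel₀ hne2
  have key : ∀ s : ℂ, rescale (2:ℂ) (Φ s) * (rescale (2:ℂ) (exp ℂ) - 1)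
      = C 2 * X * rescale (2 * s) (exp ℂ) := by
    intro s
    rw [← map_one (rescale (2:ℂ)), ← map_sub, ← map_mul, Φ_gf, map_mul, rescale_X,
      rescale_rescale, mul_comm s 2]
  rw [add_mul, key, key]
  have h1 : rescale (2 * (t + 1/2)) (exp ℂ) = rescale (2*t) (exp ℂ) * exp ℂ := by
    have := exp_mul_exp_eq_exp_add (2*t : ℂ) 1
    rw [rescale_one] at this
    have h2 : 2 * (t + 1/2) = 2*t + 1 := by ring
    rw [h2, ← this, RingHom.id_apply]
  rw [h1, rescale_two_exp]
  have h3 : (exp ℂ * exp ℂ - 1 : ℂ⟦X⟧) = (exp ℂ - 1) * (exp ℂ + 1) := by ring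
  rw [h3, ← mul_assoc, mul_assoc 2, Φ_gf, two_eq_C]
  ring

lemma bp_dup (N : ℕ) (t : ℂ) :
    2 * bernoulliPoly N (2*t) = 2^N * (bernoulliPoly N t + bernoulliPoly N (t + 1/2)) := by
  have h := congrArg (coeff N) (Φ_dup t)
  rw [two_eq_C, ← smul_eq_C_mul] at h
  simp only [map_add, map_smul, smul_eq_mul, coeff_rescale, coeff_Φ] at h
  have hN := fact_cast_ne N
  field_simp at h
  rw [show t + 1/2 = (2*t+1)/2 by ring]
  linear_combination h

/-- the elementary series `(1 - e^X)/2` -/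
noncomputable def u : ℂ⟦X⟧ := C (1/2) * (1 - exp ℂ)

lemma upow_mul (k : ℕ) (z : ℂ) :
    u ^ k * rescale z (exp ℂ)
      = ∑ j ∈ range (k+1),
          C ((1/2)^k * ((-1)^j * (k.choose j : ℂ))) * rescale ((j : ℂ) + z) (exp ℂ) := by
  have h1 : u ^ k = C ((1/2)^k) * (-(exp ℂ) + 1) ^ k := by
    rw [u, mul_pow, map_pow]
    congr 1
    ring
  rw [h1, add_pow, Finset.mul_sum, Finset.sum_mul]
  refine Finset.sum_congr rfl fun j hj => ?_
  rw [neg_pow, one_pow, exp_pow_eq_rescale_exp]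
  have hc : ((k.choose j : ℕ) : ℂ⟦X⟧) = C ((k.choose j : ℕ) : ℂ) := by
    rw [map_natCast]
  have hn : ((-1 : ℂ⟦X⟧) ^ j) = C ((-1)^j) := by
    rw [map_pow, map_neg, map_one]
  rw [hc, hn, ← exp_mul_exp_eq_exp_add (j:ℂ) z, map_mul, map_mul]
  ring

noncomputable def S (m : ℕ) (z : ℂ) : ℂ⟦X⟧ :=
  (∑ k ∈ range (m+1), u^k) * rescale z (exp ℂ)

lemma coeff_S (m : ℕ) (z : ℂ) :
    coeff m (S m z) = (1/(m ! : ℂ)) * eulerPoly m z := by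
  rw [S, Finset.sum_mul, map_sum, eulerPoly, Finset.mul_sum]
  refine Finset.sum_congr rfl fun k hk => ?_
  rw [upow_mul, map_sum, Finset.mul_sum, Finset.mul_sum]
  refine Finset.sum_congr rfl fun j hj => ?_
  rw [coeff_C_mul, coeff_rescale, coeff_exp]
  have : (algebraMap ℚ ℂ) (1 / (m ! : ℚ)) = 1 / (m ! : ℂ) := by
    push_cast
    simp
  rw [this, add_comm (j:ℂ) z]
  simp only [one_div, inv_pow]
  ac_rfl

lemma h_exp_one : (exp ℂ + 1) = 2 * (1 - u) := by
  rw [u]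
  have h12 : (2 : ℂ⟦X⟧) * (C (1/2)) = 1 := by
    rw [two_eq_C, ← map_mul]; norm_num
  linear_combination (1 - exp ℂ) * h12

lemma hgeom (m : ℕ) (z : ℂ) :
    (exp ℂ + 1) * S m z
      = 2 * rescale z (exp ℂ) - 2 * (u^(m+1) * rescale z (exp ℂ)) := by
  have hg := geom_sum_mul u (m+1)
  rw [h_exp_one, S]
  linear_combination (-(2 * rescale z (exp ℂ))) * hg

lemma e2 (z : ℂ) : rescale 2 (Φ (z/2)) * ((exp ℂ - 1)*(exp ℂ + 1))
    = 2 * (X * rescale z (exp ℂ)) := by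
  have h : (exp ℂ - 1)*(exp ℂ + 1) = rescale 2 (exp ℂ) - 1 := by
    rw [rescale_two_exp]; ring
  rw [h, ← map_one (rescale (2:ℂ)), ← map_sub, ← map_mul, Φ_gf, map_mul, rescale_X,
    rescale_rescale, ← two_eq_C]
  norm_num
  ring

lemma key (m : ℕ) (z : ℂ) :
    (X * S m z - (2 * Φ z - 2 * rescale 2 (Φ (z/2)))) * ((exp ℂ - 1) * (exp ℂ + 1))
      = -(2 * (X * ((exp ℂ - 1) * (u^(m+1) * rescale z (exp ℂ))))) := by
  have e1 := Φ_gf z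
  have hg := hgeom m z
  have he2 := e2 z
  linear_combination (X * (exp ℂ - 1)) * hg - (2*(exp ℂ + 1)) * e1 + 2 * he2

lemma coeff_eq (m : ℕ) (z : ℂ) :
    coeff (m+1) (X * S m z) = coeff (m+1) (2 * Φ z - 2 * rescale 2 (Φ (z/2))) := by
  obtain ⟨W, hW⟩ : (X : ℂ⟦X⟧) ∣ (exp ℂ - 1) := by
    rw [X_dvd_iff]
    simp [constantCoeff_exp]
  obtain ⟨Y, hY⟩ : (X : ℂ⟦X⟧) ∣ u := by
    rw [X_dvd_iff, u]
    simp [constantCoeff_exp]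
  have hWc : constantCoeff W = 1 := by
    have h1 : coeff 1 (exp ℂ - 1) = 1 := by
      simp [coeff_exp]
    rw [hW, coeff_succ_X_mul, coeff_zero_eq_constantCoeff] at h1
    exact h1
  set D := X * S m z - (2 * Φ z - 2 * rescale 2 (Φ (z/2))) with hD
  have key2 : D * (W * (exp ℂ + 1)) * X
      = (X^(m+2) * (-(2 * (W * (Y^(m+1) * rescale z (exp ℂ)))))) * X := by
    have k1 := key m z
    rw [hW, hY] at k1
    rw [hD]
    linear_combination k1
  have key3 : D * (W * (exp ℂ + 1)) = X^(m+2) * (-(2 * (W * (Y^(m+1) * rescale z (exp ℂ))))) :=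
    mul_right_cancel₀ X_ne_zero key2
  have hVunit : IsUnit (W * (exp ℂ + 1)) := by
    rw [PowerSeries.isUnit_iff_constantCoeff]
    simp [hWc, constantCoeff_exp]
  have hdvd : (X : ℂ⟦X⟧)^(m+2) ∣ D := (hVunit.dvd_mul_right).mp ⟨_, key3⟩
  have : coeff (m+1) D = 0 := X_pow_dvd_iff.mp hdvd (m+1) (by omega)
  rw [hD, map_sub, sub_eq_zero] at this
  exact this

lemma EB (m : ℕ) (z : ℂ) :
    ((m : ℂ) + 1) * eulerPoly m z
      = 2 * bernoulliPoly (m+1) z - 2^(m+2) * bernoulliPoly (m+1) (z/2) := by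
  have h := coeff_eq m z
  rw [coeff_succ_X_mul, coeff_S] at h
  rw [two_eq_C, ← smul_eq_C_mul, ← smul_eq_C_mul, map_sub, map_smul, map_smul,
    smul_eq_mul, smul_eq_mul, coeff_rescale, coeff_Φ, coeff_Φ] at h
  have hm : ((m+1)! : ℂ) = ((m:ℂ)+1) * (m ! : ℂ) := by
    rw [factorial_succ]
    push_cast
    ring
  have hmne := fact_cast_ne m
  have hm1ne := fact_cast_ne (m+1)
  field_simp at h
  rw [hm] at h
  have h4 : (((m:ℂ)+1) * eulerPoly m z) * (m ! : ℂ)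
      = (2 * bernoulliPoly (m + 1) z - 2^(m+2) * bernoulliPoly (m + 1) (z / 2)) * (m ! : ℂ) := by
    rw [show (2:ℂ)^(m+2) = 2 * 2^(m+1) by ring]
    linear_combination h
  exact mul_right_cancel₀ hmne h4

end Stmt13Aux

namespace W
local notation "I" => Complex.I

lemma c1 : ((-1 : ℂ) - I)^4 = -4 := by
  linear_combination (I^2 + 4*I + 5) * Complex.I_sq
lemma c2 : ((-1 : ℂ) + I)^4 = -4 := by
  linear_combination (I^2 - 4*I + 5) * Complex.I_sq
lemma c3 : ((2 : ℂ) + 2*I)^4 = -64 := by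
  linear_combination (16*I^2 + 64*I + 80) * Complex.I_sq
lemma c4 : ((2 : ℂ) - 2*I)^4 = -64 := by
  linear_combination (16*I^2 - 64*I + 80) * Complex.I_sq
lemma c5 : ((-2 : ℂ) - 2*I)^4 = -64 := by
  rw [show ((-2:ℂ) - 2*I) = -(2 + 2*I) by ring, Even.neg_pow (by decide)]
  exact c3
lemma c6 : ((-2 : ℂ) + 2*I)^4 = -64 := by
  rw [show ((-2:ℂ) + 2*I) = -(2 - 2*I) by ring, Even.neg_pow (by decide)]
  exact c4

lemma m4 (p : ℕ) : (-4 : ℂ)^p = (-1)^p * 2^(2*p) := by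
  rw [pow_mul, ← mul_pow]; norm_num
lemma m64 (p : ℕ) : (-64 : ℂ)^p = (-1)^p * 2^(6*p) := by
  rw [pow_mul, ← mul_pow]; norm_num

lemma psplit (b : ℂ) (p r : ℕ) : b^(4*p + r) = (b^4)^p * b^r := by
  rw [pow_add, pow_mul]

lemma wg0 (k : ℕ) : 2*I*(((-1:ℂ)-I)^(4*k) - ((-1:ℂ)+I)^(4*k)) = 0 := by
  rw [show 4*k = 4*k + 0 by ring, psplit, psplit, c1, c2]
  ring

lemma wg1 (k : ℕ) (hk : 1 ≤ k) :
    2*I*(((-1:ℂ)-I)^(4*k-3) - ((-1:ℂ)+I)^(4*k-3)) = -((-1)^k * 2^(2*k)) := by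
  obtain ⟨p, rfl⟩ : ∃ p, k = p + 1 := ⟨k-1, by omega⟩
  rw [show 4*(p+1)-3 = 4*p+1 by omega, psplit, psplit, c1, c2, m4]
  linear_combination (-4*(-1:ℂ)^p*2^(2*p)) * Complex.I_sq

lemma wg2 (k : ℕ) (hk : 1 ≤ k) :
    2*I*(((-1:ℂ)-I)^(4*k-2) - ((-1:ℂ)+I)^(4*k-2)) = 2*((-1)^k * 2^(2*k)) := by
  obtain ⟨p, rfl⟩ : ∃ p, k = p + 1 := ⟨k-1, by omega⟩
  rw [show 4*(p+1)-2 = 4*p+2 by omega, psplit, psplit, c1, c2, m4]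
  linear_combination (8*(-1:ℂ)^p*2^(2*p)) * Complex.I_sq

lemma wg3 (k : ℕ) (hk : 1 ≤ k) :
    2*I*(((-1:ℂ)-I)^(4*k-1) - ((-1:ℂ)+I)^(4*k-1)) = -((-1)^k * 2^(2*k+1)) := by
  obtain ⟨p, rfl⟩ : ∃ p, k = p + 1 := ⟨k-1, by omega⟩
  rw [show 4*(p+1)-1 = 4*p+3 by omega, psplit, psplit, c1, c2, m4]
  linear_combination ((-8*(-1:ℂ)^p*2^(2*p)) + (-4*(-1:ℂ)^p*2^(2*p))*I^2) * Complex.I_sq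

lemma wh0 (k : ℕ) : I*(((2:ℂ)+2*I)^(4*k) - ((2:ℂ)-2*I)^(4*k)
    + ((-2:ℂ)-2*I)^(4*k) - ((-2:ℂ)+2*I)^(4*k)) = 0 := by
  rw [show 4*k = 4*k + 0 by ring, psplit, psplit, psplit, psplit, c3, c4, c5, c6]
  ring

lemma wh1 (k : ℕ) (hk : 1 ≤ k) : I*(((2:ℂ)+2*I)^(4*k-3) - ((2:ℂ)-2*I)^(4*k-3)
    + ((-2:ℂ)-2*I)^(4*k-3) - ((-2:ℂ)+2*I)^(4*k-3)) = 0 := by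
  obtain ⟨p, rfl⟩ : ∃ p, k = p + 1 := ⟨k-1, by omega⟩
  rw [show 4*(p+1)-3 = 4*p+1 by omega, psplit, psplit, psplit, psplit, c3, c4, c5, c6]
  ring

lemma wh3 (k : ℕ) (hk : 1 ≤ k) : I*(((2:ℂ)+2*I)^(4*k-1) - ((2:ℂ)-2*I)^(4*k-1)
    + ((-2:ℂ)-2*I)^(4*k-1) - ((-2:ℂ)+2*I)^(4*k-1)) = 0 := by
  obtain ⟨p, rfl⟩ : ∃ p, k = p + 1 := ⟨k-1, by omega⟩
  rw [show 4*(p+1)-1 = 4*p+3 by omega, psplit, psplit, psplit, psplit, c3, c4, c5, c6]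
  ring

lemma wh2 (k : ℕ) (hk : 1 ≤ k) : I*(((2:ℂ)+2*I)^(4*k-2) - ((2:ℂ)-2*I)^(4*k-2)
    + ((-2:ℂ)-2*I)^(4*k-2) - ((-2:ℂ)+2*I)^(4*k-2)) = (-1)^k * 2^(2*k) * 2^(4*k-1) := by
  obtain ⟨p, rfl⟩ : ∃ p, k = p + 1 := ⟨k-1, by omega⟩
  rw [show 4*(p+1)-2 = 4*p+2 by omega, show 4*(p+1)-1 = 4*p+3 by omega,
    psplit, psplit, psplit, psplit, c3, c4, c5, c6, m64]
  linear_combination (32*(-1:ℂ)^p*2^(6*p)) * Complex.I_sq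

lemma split_sum (f : ℕ → ℂ) (n : ℕ) (hn : 1 ≤ n) :
    ∑ j ∈ range (4*n-1), f j
      = (∑ k ∈ range n, f (4*k)) + (∑ k ∈ Icc 1 n, f (4*k-3))
        + (∑ k ∈ Icc 1 n, f (4*k-2)) + (∑ k ∈ Icc 1 (n-1), f (4*k-1)) := by
  induction n, hn using Nat.le_induction with
  | base =>
    norm_num [Finset.sum_range_succ, Finset.Icc_self]
  | succ n hn ih =>
    have e0 : 4*(n+1)-1 = (4*n-1) + 1 + 1 + 1 + 1 := by omega
    rw [e0, Finset.sum_range_succ, Finset.sum_range_succ, Finset.sum_range_succ,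
      Finset.sum_range_succ, ih]
    rw [Finset.sum_range_succ]
    rw [Finset.sum_Icc_succ_top (by omega : 1 ≤ n+1), Finset.sum_Icc_succ_top (by omega : 1 ≤ n+1)]
    have e1 : (n+1) - 1 = (n-1) + 1 := by omega
    rw [e1, Finset.sum_Icc_succ_top (by omega : 1 ≤ (n-1)+1)]
    have g1 : 4*n-1+1 = 4*n := by omega
    have g2 : 4*n-1+1+1 = 4*(n+1)-3 := by omega
    have g3 : 4*n-1+1+1+1 = 4*(n+1)-2 := by omega
    have g5 : 4*((n-1)+1)-1 = 4*n-1 := by omega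
    rw [g1, g2, g3, g5]
    ring

lemma sum_pow (N : ℕ) (x b : ℂ) (hb : b ≠ 0) :
    ∑ j ∈ range (N+1), (N.choose j : ℂ) * bernoulliPoly j x * b^j
      = b^N * bernoulliPoly N (x + b⁻¹) := by
  rw [Stmt13Aux.bp_add, Finset.mul_sum]
  refine Finset.sum_congr rfl fun j hj => ?_
  have hj' : j ≤ N := by simpa [Nat.lt_succ_iff] using mem_range.mp hj
  have hbn : b^N = b^j * b^(N-j) := by
    rw [← pow_add]
    congr 1
    omega
  rw [hbn, inv_pow]
  have hbp : (b:ℂ)^(N-j) ≠ 0 := pow_ne_zero _ hb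
  field_simp

lemma inv1 : ((-1:ℂ) - I)⁻¹ = ((-1) + I)/2 := by
  rw [inv_eq_of_mul_eq_one_right]
  linear_combination (-1/2 : ℂ) * Complex.I_sq

lemma inv2 : ((-1:ℂ) + I)⁻¹ = ((-1) - I)/2 := by
  rw [inv_eq_of_mul_eq_one_right]
  linear_combination (-1/2 : ℂ) * Complex.I_sq

lemma inv3 : ((2:ℂ) + 2*I)⁻¹ = (1 - I)/4 := by
  rw [inv_eq_of_mul_eq_one_right]
  linear_combination (-1/2 : ℂ) * Complex.I_sq

lemma inv4 : ((2:ℂ) - 2*I)⁻¹ = (1 + I)/4 := by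
  rw [inv_eq_of_mul_eq_one_right]
  linear_combination (-1/2 : ℂ) * Complex.I_sq

lemma inv5 : ((-2:ℂ) - 2*I)⁻¹ = ((-1) + I)/4 := by
  rw [inv_eq_of_mul_eq_one_right]
  linear_combination (-1/2 : ℂ) * Complex.I_sq

lemma inv6 : ((-2:ℂ) + 2*I)⁻¹ = ((-1) - I)/4 := by
  rw [inv_eq_of_mul_eq_one_right]
  linear_combination (-1/2 : ℂ) * Complex.I_sq

lemma ne1 : ((-1:ℂ) - I) ≠ 0 := by
  intro h
  have := congrArg Complex.im h
  simp at this

lemma ne2 : ((-1:ℂ) + I) ≠ 0 := by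
  intro h
  have := congrArg Complex.im h
  simp at this

lemma ne3 : ((2:ℂ) + 2*I) ≠ 0 := by
  intro h
  have := congrArg Complex.re h
  simp at this

lemma ne4 : ((2:ℂ) - 2*I) ≠ 0 := by
  intro h
  have := congrArg Complex.re h
  simp at this

lemma ne5 : ((-2:ℂ) - 2*I) ≠ 0 := by
  intro h
  have := congrArg Complex.re h
  simp at this

lemma ne6 : ((-2:ℂ) + 2*I) ≠ 0 := by
  intro h
  have := congrArg Complex.re h
  simp at this

end W

theorem stmt13 (n : ℕ) (hn : 0 < n) (z : ℂ) :
    ∑ k ∈ Icc 1 n, (-1 : ℂ) ^ k * 2 ^ (2 * k + 1) * (2 * (k : ℂ) - 1) *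
        ((4 * n - 2).choose (4 * k - 2) : ℂ) * eulerPoly (4 * k - 3) z
      = ∑ k ∈ Icc 1 (n - 1), (-1 : ℂ) ^ k * 2 ^ (2 * k + 1) *
          ((4 * n - 2).choose (4 * k - 1) : ℂ) * bernoulliPoly (4 * k - 1) z
        + ∑ k ∈ Icc 1 n, (-1 : ℂ) ^ k * 2 ^ (2 * k) *
          ((4 * n - 2).choose (4 * k - 3) : ℂ) * bernoulliPoly (4 * k - 3) z := by
  have hn1 : 1 ≤ n := hn
  -- Step 1: termwise Euler → Bernoulli
  have hstep1 : ∀ k ∈ Icc 1 n,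
      (-1 : ℂ) ^ k * 2 ^ (2 * k + 1) * (2 * (k : ℂ) - 1) *
        ((4 * n - 2).choose (4 * k - 2) : ℂ) * eulerPoly (4 * k - 3) z
      = ((-1:ℂ)^k * 2^(2*k) * ((4 * n - 2).choose (4 * k - 2):ℂ)) * (2 * bernoulliPoly (4*k-2) z)
        - ((-1:ℂ)^k * 2^(2*k) * 2^(4*k-1) * ((4 * n - 2).choose (4 * k - 2):ℂ)) * bernoulliPoly (4*k-2) (z/2) := by
    intro k hk
    have hk1 : 1 ≤ k := (mem_Icc.mp hk).1
    have hEB := Stmt13Aux.EB (4*k-3) z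
    rw [show 4*k-3+1 = 4*k-2 by omega, show 4*k-3+2 = 4*k-1 by omega] at hEB
    have hcast : ((4*k-3 : ℕ) : ℂ) + 1 = 2*(2*(k:ℂ) - 1) := by
      push_cast [Nat.cast_sub (show 3 ≤ 4*k by omega)]
      ring
    rw [hcast] at hEB
    linear_combination ((-1:ℂ)^k * 2^(2*k) * ((4 * n - 2).choose (4 * k - 2):ℂ)) * hEB
  rw [Finset.sum_congr rfl hstep1, Finset.sum_sub_distrib]
  have hMain :
      (∑ k ∈ Icc 1 n, ((-1:ℂ)^k * 2^(2*k) * ((4 * n - 2).choose (4 * k - 2):ℂ)) * (2 * bernoulliPoly (4*k-2) z))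
        - (∑ k ∈ Icc 1 (n - 1), (-1 : ℂ) ^ k * 2 ^ (2 * k + 1) *
            ((4 * n - 2).choose (4 * k - 1) : ℂ) * bernoulliPoly (4 * k - 1) z)
        - (∑ k ∈ Icc 1 n, (-1 : ℂ) ^ k * 2 ^ (2 * k) *
            ((4 * n - 2).choose (4 * k - 3) : ℂ) * bernoulliPoly (4 * k - 3) z)
      = ∑ k ∈ Icc 1 n, ((-1:ℂ)^k * 2^(2*k) * 2^(4*k-1) * ((4 * n - 2).choose (4 * k - 2):ℂ))
          * bernoulliPoly (4*k-2) (z/2) := by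
    have hz : ∑ j ∈ range (4*n-1),
        (2*Complex.I*(((-1:ℂ)-Complex.I)^j - ((-1:ℂ)+Complex.I)^j)) * ((4 * n - 2).choose j : ℂ) * bernoulliPoly j z
        = (∑ k ∈ Icc 1 n, ((-1:ℂ)^k * 2^(2*k) * ((4 * n - 2).choose (4 * k - 2):ℂ)) * (2 * bernoulliPoly (4*k-2) z))
          - (∑ k ∈ Icc 1 (n - 1), (-1 : ℂ) ^ k * 2 ^ (2 * k + 1) *
              ((4 * n - 2).choose (4 * k - 1) : ℂ) * bernoulliPoly (4 * k - 1) z)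
          - (∑ k ∈ Icc 1 n, (-1 : ℂ) ^ k * 2 ^ (2 * k) *
              ((4 * n - 2).choose (4 * k - 3) : ℂ) * bernoulliPoly (4 * k - 3) z) := by
      rw [W.split_sum _ n hn1]
      have h0 : (∑ k ∈ range n,
          (2*Complex.I*(((-1:ℂ)-Complex.I)^(4*k) - ((-1:ℂ)+Complex.I)^(4*k)))
            * ((4 * n - 2).choose (4*k) : ℂ) * bernoulliPoly (4*k) z) = 0 :=
        Finset.sum_eq_zero fun k hk => by rw [W.wg0]; ring
      have h1 : (∑ k ∈ Icc 1 n,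
          (2*Complex.I*(((-1:ℂ)-Complex.I)^(4*k-3) - ((-1:ℂ)+Complex.I)^(4*k-3)))
            * ((4 * n - 2).choose (4*k-3) : ℂ) * bernoulliPoly (4*k-3) z)
          = ∑ k ∈ Icc 1 n, -((-1 : ℂ) ^ k * 2 ^ (2 * k) *
              ((4 * n - 2).choose (4 * k - 3) : ℂ) * bernoulliPoly (4 * k - 3) z) :=
        Finset.sum_congr rfl fun k hk => by rw [W.wg1 k (mem_Icc.mp hk).1]; ring
      have h2 : (∑ k ∈ Icc 1 n,
          (2*Complex.I*(((-1:ℂ)-Complex.I)^(4*k-2) - ((-1:ℂ)+Complex.I)^(4*k-2)))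
            * ((4 * n - 2).choose (4*k-2) : ℂ) * bernoulliPoly (4*k-2) z)
          = ∑ k ∈ Icc 1 n, ((-1:ℂ)^k * 2^(2*k) * ((4 * n - 2).choose (4 * k - 2):ℂ))
              * (2 * bernoulliPoly (4*k-2) z) :=
        Finset.sum_congr rfl fun k hk => by rw [W.wg2 k (mem_Icc.mp hk).1]; ring
      have h3 : (∑ k ∈ Icc 1 (n-1),
          (2*Complex.I*(((-1:ℂ)-Complex.I)^(4*k-1) - ((-1:ℂ)+Complex.I)^(4*k-1)))
            * ((4 * n - 2).choose (4*k-1) : ℂ) * bernoulliPoly (4*k-1) z)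
          = ∑ k ∈ Icc 1 (n-1), -((-1 : ℂ) ^ k * 2 ^ (2 * k + 1) *
              ((4 * n - 2).choose (4 * k - 1) : ℂ) * bernoulliPoly (4 * k - 1) z) :=
        Finset.sum_congr rfl fun k hk => by rw [W.wg3 k (mem_Icc.mp hk).1]; ring
      rw [h0, h1, h2, h3, Finset.sum_neg_distrib, Finset.sum_neg_distrib]
      ring
    have hz2 : ∑ j ∈ range (4*n-1),
        (Complex.I*(((2:ℂ)+2*Complex.I)^j - ((2:ℂ)-2*Complex.I)^j
          + ((-2:ℂ)-2*Complex.I)^j - ((-2:ℂ)+2*Complex.I)^j))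
          * ((4 * n - 2).choose j : ℂ) * bernoulliPoly j (z/2)
        = ∑ k ∈ Icc 1 n, ((-1:ℂ)^k * 2^(2*k) * 2^(4*k-1) * ((4 * n - 2).choose (4 * k - 2):ℂ))
            * bernoulliPoly (4*k-2) (z/2) := by
      rw [W.split_sum _ n hn1]
      have h0 : (∑ k ∈ range n,
          (Complex.I*(((2:ℂ)+2*Complex.I)^(4*k) - ((2:ℂ)-2*Complex.I)^(4*k)
            + ((-2:ℂ)-2*Complex.I)^(4*k) - ((-2:ℂ)+2*Complex.I)^(4*k)))
            * ((4 * n - 2).choose (4*k) : ℂ) * bernoulliPoly (4*k) (z/2)) = 0 :=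
        Finset.sum_eq_zero fun k hk => by rw [W.wh0]; ring
      have h1 : (∑ k ∈ Icc 1 n,
          (Complex.I*(((2:ℂ)+2*Complex.I)^(4*k-3) - ((2:ℂ)-2*Complex.I)^(4*k-3)
            + ((-2:ℂ)-2*Complex.I)^(4*k-3) - ((-2:ℂ)+2*Complex.I)^(4*k-3)))
            * ((4 * n - 2).choose (4*k-3) : ℂ) * bernoulliPoly (4*k-3) (z/2)) = 0 :=
        Finset.sum_eq_zero fun k hk => by rw [W.wh1 k (mem_Icc.mp hk).1]; ring
      have h3 : (∑ k ∈ Icc 1 (n-1),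
          (Complex.I*(((2:ℂ)+2*Complex.I)^(4*k-1) - ((2:ℂ)-2*Complex.I)^(4*k-1)
            + ((-2:ℂ)-2*Complex.I)^(4*k-1) - ((-2:ℂ)+2*Complex.I)^(4*k-1)))
            * ((4 * n - 2).choose (4*k-1) : ℂ) * bernoulliPoly (4*k-1) (z/2)) = 0 :=
        Finset.sum_eq_zero fun k hk => by rw [W.wh3 k (mem_Icc.mp hk).1]; ring
      have h2 : (∑ k ∈ Icc 1 n,
          (Complex.I*(((2:ℂ)+2*Complex.I)^(4*k-2) - ((2:ℂ)-2*Complex.I)^(4*k-2)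
            + ((-2:ℂ)-2*Complex.I)^(4*k-2) - ((-2:ℂ)+2*Complex.I)^(4*k-2)))
            * ((4 * n - 2).choose (4*k-2) : ℂ) * bernoulliPoly (4*k-2) (z/2))
          = ∑ k ∈ Icc 1 n, ((-1:ℂ)^k * 2^(2*k) * 2^(4*k-1) * ((4 * n - 2).choose (4 * k - 2):ℂ))
              * bernoulliPoly (4*k-2) (z/2) :=
        Finset.sum_congr rfl fun k hk => by rw [W.wh2 k (mem_Icc.mp hk).1]
      rw [h0, h1, h2, h3]
      ring
    have hzval : ∑ j ∈ range (4*n-1),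
        (2*Complex.I*(((-1:ℂ)-Complex.I)^j - ((-1:ℂ)+Complex.I)^j)) * ((4 * n - 2).choose j : ℂ) * bernoulliPoly j z
        = 2*Complex.I*( ((-1:ℂ)-Complex.I)^(4*n-2) * bernoulliPoly (4*n-2) (z + ((-1)+Complex.I)/2)
          - ((-1:ℂ)+Complex.I)^(4*n-2) * bernoulliPoly (4*n-2) (z + ((-1)-Complex.I)/2) ) := by
      have hterm : ∀ j ∈ range (4*n-1),
          (2*Complex.I*(((-1:ℂ)-Complex.I)^j - ((-1:ℂ)+Complex.I)^j)) * ((4 * n - 2).choose j : ℂ) * bernoulliPoly j z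
          = 2*Complex.I * (((4*n-2).choose j : ℂ) * bernoulliPoly j z * ((-1:ℂ)-Complex.I)^j)
            - 2*Complex.I * (((4*n-2).choose j : ℂ) * bernoulliPoly j z * ((-1:ℂ)+Complex.I)^j) :=
        fun j hj => by ring
      rw [Finset.sum_congr rfl hterm, Finset.sum_sub_distrib, ← Finset.mul_sum, ← Finset.mul_sum,
        show 4*n-1 = (4*n-2)+1 by omega,
        W.sum_pow _ _ _ W.ne1, W.sum_pow _ _ _ W.ne2, W.inv1, W.inv2]
      ring
    have hz2val : ∑ j ∈ range (4*n-1),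
        (Complex.I*(((2:ℂ)+2*Complex.I)^j - ((2:ℂ)-2*Complex.I)^j
          + ((-2:ℂ)-2*Complex.I)^j - ((-2:ℂ)+2*Complex.I)^j))
          * ((4 * n - 2).choose j : ℂ) * bernoulliPoly j (z/2)
        = Complex.I*( ((2:ℂ)+2*Complex.I)^(4*n-2) * bernoulliPoly (4*n-2) (z/2 + (1-Complex.I)/4)
          - ((2:ℂ)-2*Complex.I)^(4*n-2) * bernoulliPoly (4*n-2) (z/2 + (1+Complex.I)/4)
          + ((-2:ℂ)-2*Complex.I)^(4*n-2) * bernoulliPoly (4*n-2) (z/2 + ((-1)+Complex.I)/4)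
          - ((-2:ℂ)+2*Complex.I)^(4*n-2) * bernoulliPoly (4*n-2) (z/2 + ((-1)-Complex.I)/4) ) := by
      have hterm : ∀ j ∈ range (4*n-1),
          (Complex.I*(((2:ℂ)+2*Complex.I)^j - ((2:ℂ)-2*Complex.I)^j
            + ((-2:ℂ)-2*Complex.I)^j - ((-2:ℂ)+2*Complex.I)^j))
            * ((4 * n - 2).choose j : ℂ) * bernoulliPoly j (z/2)
          = (Complex.I * (((4*n-2).choose j : ℂ) * bernoulliPoly j (z/2) * ((2:ℂ)+2*Complex.I)^j)
            - Complex.I * (((4*n-2).choose j : ℂ) * bernoulliPoly j (z/2) * ((2:ℂ)-2*Complex.I)^j))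
            + (Complex.I * (((4*n-2).choose j : ℂ) * bernoulliPoly j (z/2) * ((-2:ℂ)-2*Complex.I)^j)
            - Complex.I * (((4*n-2).choose j : ℂ) * bernoulliPoly j (z/2) * ((-2:ℂ)+2*Complex.I)^j)) :=
        fun j hj => by ring
      rw [Finset.sum_congr rfl hterm, Finset.sum_add_distrib, Finset.sum_sub_distrib,
        Finset.sum_sub_distrib, ← Finset.mul_sum, ← Finset.mul_sum, ← Finset.mul_sum, ← Finset.mul_sum,
        show 4*n-1 = (4*n-2)+1 by omega,
        W.sum_pow _ _ _ W.ne3, W.sum_pow _ _ _ W.ne4, W.sum_pow _ _ _ W.ne5, W.sum_pow _ _ _ W.ne6,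
        W.inv3, W.inv4, W.inv5, W.inv6]
      ring
    have hfin : 2*Complex.I*( ((-1:ℂ)-Complex.I)^(4*n-2) * bernoulliPoly (4*n-2) (z + ((-1)+Complex.I)/2)
          - ((-1:ℂ)+Complex.I)^(4*n-2) * bernoulliPoly (4*n-2) (z + ((-1)-Complex.I)/2) )
        = Complex.I*( ((2:ℂ)+2*Complex.I)^(4*n-2) * bernoulliPoly (4*n-2) (z/2 + (1-Complex.I)/4)
          - ((2:ℂ)-2*Complex.I)^(4*n-2) * bernoulliPoly (4*n-2) (z/2 + (1+Complex.I)/4)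
          + ((-2:ℂ)-2*Complex.I)^(4*n-2) * bernoulliPoly (4*n-2) (z/2 + ((-1)+Complex.I)/4)
          - ((-2:ℂ)+2*Complex.I)^(4*n-2) * bernoulliPoly (4*n-2) (z/2 + ((-1)-Complex.I)/4) ) := by
      have hd1 := Stmt13Aux.bp_dup (4*n-2) (z/2 + ((-1)-Complex.I)/4)
      have hd2 := Stmt13Aux.bp_dup (4*n-2) (z/2 + ((-1)+Complex.I)/4)
      rw [show 2*(z/2 + ((-1)-Complex.I)/4) = z + ((-1)-Complex.I)/2 by ring,
        show z/2 + ((-1)-Complex.I)/4 + 1/2 = z/2 + (1-Complex.I)/4 by ring] at hd1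
      rw [show 2*(z/2 + ((-1)+Complex.I)/4) = z + ((-1)+Complex.I)/2 by ring,
        show z/2 + ((-1)+Complex.I)/4 + 1/2 = z/2 + (1+Complex.I)/4 by ring] at hd2
      rw [show 4*n-2 = 4*(n-1)+2 by omega] at hd1 hd2 ⊢
      rw [W.psplit, W.psplit, W.psplit, W.psplit, W.psplit, W.psplit,
        W.c1, W.c2, W.c3, W.c4, W.c5, W.c6]
      rw [show (2:ℂ)^(4*(n-1)+2) = 16^(n-1)*4 by rw [pow_add, pow_mul]; norm_num] at hd1 hd2
      have hp2 : ((-4:ℂ))^(n-1) * 16^(n-1) = (-64:ℂ)^(n-1) := by rw [← mul_pow]; norm_num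
      linear_combination (-2*(-4:ℂ)^(n-1)) * hd1 + (-2*(-4:ℂ)^(n-1)) * hd2
        + (-8*(bernoulliPoly (4*(n-1)+2) (z/2 + (1-Complex.I)/4)
             + bernoulliPoly (4*(n-1)+2) (z/2 + (1+Complex.I)/4)
             + bernoulliPoly (4*(n-1)+2) (z/2 + ((-1)+Complex.I)/4)
             + bernoulliPoly (4*(n-1)+2) (z/2 + ((-1)-Complex.I)/4))) * hp2
        + ((2*Complex.I+4) * (bernoulliPoly (4*(n-1)+2) (z + ((-1)+Complex.I)/2) * (-4:ℂ)^(n-1))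
           + (4-2*Complex.I) * (bernoulliPoly (4*(n-1)+2) (z + ((-1)-Complex.I)/2) * (-4:ℂ)^(n-1))
           + (4*Complex.I-8) * (bernoulliPoly (4*(n-1)+2) (z/2 + ((-1)-Complex.I)/4) * (-64:ℂ)^(n-1))
           + (-4*Complex.I-8) * (bernoulliPoly (4*(n-1)+2) (z/2 + (1-Complex.I)/4) * (-64:ℂ)^(n-1))
           + (-4*Complex.I-8) * (bernoulliPoly (4*(n-1)+2) (z/2 + ((-1)+Complex.I)/4) * (-64:ℂ)^(n-1))
           + (4*Complex.I-8) * (bernoulliPoly (4*(n-1)+2) (z/2 + (1+Complex.I)/4) * (-64:ℂ)^(n-1))) * Complex.I_sq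
    calc (∑ k ∈ Icc 1 n, ((-1:ℂ)^k * 2^(2*k) * ((4 * n - 2).choose (4 * k - 2):ℂ)) * (2 * bernoulliPoly (4*k-2) z))
        - (∑ k ∈ Icc 1 (n - 1), (-1 : ℂ) ^ k * 2 ^ (2 * k + 1) *
            ((4 * n - 2).choose (4 * k - 1) : ℂ) * bernoulliPoly (4 * k - 1) z)
        - (∑ k ∈ Icc 1 n, (-1 : ℂ) ^ k * 2 ^ (2 * k) *
            ((4 * n - 2).choose (4 * k - 3) : ℂ) * bernoulliPoly (4 * k - 3) z)
        = ∑ j ∈ range (4*n-1),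
            (2*Complex.I*(((-1:ℂ)-Complex.I)^j - ((-1:ℂ)+Complex.I)^j)) * ((4 * n - 2).choose j : ℂ) * bernoulliPoly j z := hz.symm
      _ = 2*Complex.I*( ((-1:ℂ)-Complex.I)^(4*n-2) * bernoulliPoly (4*n-2) (z + ((-1)+Complex.I)/2)
          - ((-1:ℂ)+Complex.I)^(4*n-2) * bernoulliPoly (4*n-2) (z + ((-1)-Complex.I)/2) ) := hzval
      _ = Complex.I*( ((2:ℂ)+2*Complex.I)^(4*n-2) * bernoulliPoly (4*n-2) (z/2 + (1-Complex.I)/4)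
          - ((2:ℂ)-2*Complex.I)^(4*n-2) * bernoulliPoly (4*n-2) (z/2 + (1+Complex.I)/4)
          + ((-2:ℂ)-2*Complex.I)^(4*n-2) * bernoulliPoly (4*n-2) (z/2 + ((-1)+Complex.I)/4)
          - ((-2:ℂ)+2*Complex.I)^(4*n-2) * bernoulliPoly (4*n-2) (z/2 + ((-1)-Complex.I)/4) ) := hfin
      _ = ∑ j ∈ range (4*n-1),
            (Complex.I*(((2:ℂ)+2*Complex.I)^j - ((2:ℂ)-2*Complex.I)^j
              + ((-2:ℂ)-2*Complex.I)^j - ((-2:ℂ)+2*Complex.I)^j))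
              * ((4 * n - 2).choose j : ℂ) * bernoulliPoly j (z/2) := hz2val.symm
      _ = ∑ k ∈ Icc 1 n, ((-1:ℂ)^k * 2^(2*k) * 2^(4*k-1) * ((4 * n - 2).choose (4 * k - 2):ℂ))
          * bernoulliPoly (4*k-2) (z/2) := hz2
  linear_combination hMain
end

section
/- For every nonnegative integer n, the Euler number E_n satisfies E_n = ∑_{k=0}^{⌊n/2⌋} (2^{n-2k}/(2k+1)) · (2 − 2^{n-2k}) · C(n,2k) · B_{n-2k}, where C(n,k) denotes the binomial coefficient. -/
open Finset

/-- The Euler number `E_n = 2^n·E_n(1/2)`. -/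
noncomputable def eulerNumber (n : ℕ) : ℂ := 2 ^ n * eulerPoly n (1 / 2)

/-- The Bernoulli number `B_n = B_n(0)`. -/
noncomputable def bernoulliNumber (n : ℕ) : ℂ := bernoulliPoly n 0

open Polynomial

/-- A complex polynomial invariant under shift by a nonzero `s` is constant. -/
lemma poly_const_of_periodic_s16 (p : ℂ[X]) (s : ℂ) (hs : s ≠ 0)
    (h : ∀ z : ℂ, p.eval (z + s) = p.eval z) : p = C (p.eval 0) := by
  have key : ∀ m : ℕ, p.eval ((m : ℂ) * s) = p.eval 0 := by
    intro m
    induction m with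
    | zero => simp
    | succ m ih => push_cast; rw [add_mul, one_mul, h ((m:ℂ)*s)]; exact ih
  have hroots : {x : ℂ | (p - C (p.eval 0)).IsRoot x}.Infinite := by
    apply Set.infinite_of_injective_forall_mem (f := fun m : ℕ => (m : ℂ) * s)
    · intro a b hab
      simp only [mul_eq_mul_right_iff, hs, or_false] at hab
      exact_mod_cast hab
    · intro m
      simp [Polynomial.IsRoot, key m]
  have := Polynomial.eq_zero_of_infinite_isRoot _ hroots
  linear_combination (norm := ring_nf) this

/-- Two complex polynomials with the same "average over {z, z+1}" are equal. -/
lemma poly_eq_of_avg (p q : ℂ[X])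
    (h : ∀ z : ℂ, p.eval z + p.eval (z + 1) = q.eval z + q.eval (z + 1)) : p = q := by
  set r := p - q with hr
  have hanti : ∀ z : ℂ, r.eval (z + 1) = - r.eval z := by
    intro z
    simp only [hr, eval_sub]
    linear_combination h z
  have hper : ∀ z : ℂ, r.eval (z + 2) = r.eval z := by
    intro z
    have h1 := hanti z
    have h2 := hanti (z + 1)
    rw [add_assoc] at h2; norm_num at h2
    rw [h2, h1, neg_neg]
  have hc := poly_const_of_periodic_s16 r 2 (by norm_num) hper
  have h0 : r.eval 0 = - r.eval 0 := by
    have := hanti 0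
    rw [hc] at this ⊢
    simpa using this
  have hz : r.eval 0 = 0 := by linear_combination h0 / 2
  rw [hz, map_zero] at hc
  have : p - q = 0 := hc
  linear_combination this

/-- The Bernoulli polynomial difference equation, over `ℂ`. -/
lemma bernoulliPoly_add_one (N : ℕ) (z : ℂ) :
    bernoulliPoly N (z + 1) = bernoulliPoly N z + N * z ^ (N - 1) := by
  have hq : (Polynomial.bernoulli N).comp (X + C 1) =
      Polynomial.bernoulli N + Polynomial.monomial (N - 1) (N : ℚ) := by
    apply Polynomial.funext
    intro r
    rw [eval_comp]
    simp [Polynomial.eval_monomial, add_comm r 1, Polynomial.bernoulli_eval_one_add]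
  have := congrArg (Polynomial.aeval z) hq
  rw [Polynomial.aeval_comp] at this
  simp only [map_add, Polynomial.aeval_X, Polynomial.aeval_C, Polynomial.aeval_monomial,
    map_natCast] at this
  simpa [bernoulliPoly] using this

/-- Alternating binomial sum operator. -/
noncomputable def altS (f : ℂ → ℂ) (k : ℕ) (z : ℂ) : ℂ :=
  ∑ j ∈ range (k + 1), (-1) ^ j * (k.choose j : ℂ) * f (z + j)

lemma altS_succ (f : ℂ → ℂ) (k : ℕ) (z : ℂ) :
    altS f (k + 1) z = altS f k z - altS f k (z + 1) := by
  unfold altS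
  rw [Finset.sum_range_succ' _ (k + 1)]
  have h1 : ∀ j ∈ range (k + 1), (-1 : ℂ) ^ (j+1) * ((k+1).choose (j+1) : ℂ) * f (z + ((j:ℕ)+1 : ℕ))
      = -((-1)^j * (k.choose j : ℂ) * f ((z+1) + j)) + (-1)^(j+1) * (k.choose (j+1) : ℂ) * f (z + ((j:ℕ)+1 : ℕ)) := by
    intro j _
    rw [Nat.choose_succ_succ, Nat.cast_add]
    have e : z + (((j:ℕ)+1 : ℕ) : ℂ) = z + 1 + (j : ℂ) := by push_cast; ring
    rw [e]
    ring
  rw [Finset.sum_congr rfl h1, Finset.sum_add_distrib]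
  have h2 : ∑ j ∈ range (k+1), (-1:ℂ)^(j+1) * (k.choose (j+1) : ℂ) * f (z + ((j:ℕ)+1 : ℕ))
      = ∑ j ∈ range (k+2), (-1:ℂ)^j * (k.choose j : ℂ) * f (z + j) - f z := by
    rw [Finset.sum_range_succ' (fun j => (-1:ℂ)^j * (k.choose j : ℂ) * f (z + (j:ℕ))) (k+1)]
    simp
  rw [h2, Finset.sum_range_succ _ (k+1)]
  simp only [Nat.choose_succ_self, Nat.cast_zero, Nat.choose_zero_right, Nat.cast_one,
    pow_zero, one_mul, zero_mul, mul_zero, add_zero]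
  rw [Finset.sum_neg_distrib]
  ring

lemma altS_poly_zero : ∀ (k : ℕ) (p : ℂ[X]), p.natDegree < k → ∀ z : ℂ, altS (fun w => p.eval w) k z = 0 := by
  intro k
  induction k with
  | zero => intro p hp; omega
  | succ k ih =>
    intro p hp z
    rw [altS_succ]
    have key : altS (fun w => p.eval w) k z - altS (fun w => p.eval w) k (z + 1)
        = altS (fun w => (p - p.comp (X + C 1)).eval w) k z := by
      unfold altS
      rw [← Finset.sum_sub_distrib]
      apply Finset.sum_congr rfl
      intro j _
      have e : (z + 1) + (j : ℂ) = (z + (j:ℂ)) + 1 := by ring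
      simp only [eval_sub, eval_comp, eval_add, eval_X, eval_C, e]
      ring
    rw [key]
    set q := p - p.comp (X + C 1) with hq
    by_cases h0 : p.natDegree = 0
    · obtain ⟨c, rfl⟩ := Polynomial.natDegree_eq_zero.mp h0
      have : q = 0 := by simp [hq]
      rw [this]
      unfold altS
      simp
    · have hp0 : p ≠ 0 := fun h => h0 (by simp [h])
      rcases eq_or_ne q 0 with hq0 | hqne
      · unfold altS; simp [hq0]
      · have hnd : ((X : ℂ[X]) + C 1).natDegree = 1 := Polynomial.natDegree_X_add_C 1
        have hmon : ((X : ℂ[X]) + C 1).leadingCoeff = 1 := (Polynomial.monic_X_add_C (1:ℂ)).leadingCoeff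
        have hcompdeg : (p.comp (X + C 1)).natDegree = p.natDegree := by
          rw [Polynomial.natDegree_comp, hnd, mul_one]
        have hcne : p.comp (X + C 1) ≠ 0 := by
          intro hcc
          rw [hcc] at hcompdeg
          simp at hcompdeg
          exact h0 hcompdeg.symm
        have hlc : p.leadingCoeff = (p.comp (X + C 1)).leadingCoeff := by
          rw [Polynomial.leadingCoeff_comp (by rw [hnd]; norm_num), hmon, one_pow, mul_one]
        have hdd : p.degree = (p.comp (X + C 1)).degree := by
          rw [Polynomial.degree_eq_natDegree hp0, Polynomial.degree_eq_natDegree hcne, hcompdeg]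
        have hqlt : q.degree < p.degree := Polynomial.degree_sub_lt hdd hp0 hlc
        have hdeg : q.natDegree < k := by
          have h1 : q.natDegree < p.natDegree := by
            have h2 := Polynomial.natDegree_lt_natDegree hqne (hdd ▸ hqlt)
            rwa [hcompdeg] at h2
          omega
        exact ih q hdeg z

lemma eulerPoly_eq_altS (n : ℕ) (z : ℂ) :
    eulerPoly n z = ∑ k ∈ range (n + 1), (1 / 2 ^ k : ℂ) * altS (fun w => w ^ n) k z := rfl

lemma eulerPoly_funeq (n : ℕ) (z : ℂ) :
    eulerPoly n z + eulerPoly n (z + 1) = 2 * z ^ n := by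
  rw [eulerPoly_eq_altS, eulerPoly_eq_altS, ← Finset.sum_add_distrib]
  have h1 : ∀ k ∈ range (n + 1),
      (1 / 2 ^ k : ℂ) * altS (fun w => w ^ n) k z + (1 / 2 ^ k : ℂ) * altS (fun w => w ^ n) k (z + 1)
      = 2 * ((1 / 2 ^ k : ℂ) * altS (fun w => w ^ n) k z
          - (1 / 2 ^ (k+1) : ℂ) * altS (fun w => w ^ n) (k+1) z) := by
    intro k _
    have := altS_succ (fun w => w ^ n) k z
    rw [this]
    rw [pow_succ]
    field_simp
    ring
  rw [Finset.sum_congr rfl h1, ← Finset.mul_sum,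
    Finset.sum_range_sub' (fun k => (1 / 2 ^ k : ℂ) * altS (fun w => w ^ n) k z) (n+1)]
  have hD0 : altS (fun w => w ^ n) 0 z = z ^ n := by
    unfold altS; simp
  have hDn1 : altS (fun w => w ^ n) (n+1) z = 0 := by
    have hpp : ∀ w : ℂ, w ^ n = ((X : ℂ[X]) ^ n).eval w := by intro w; simp
    have : (fun w : ℂ => w ^ n) = (fun w => ((X : ℂ[X]) ^ n).eval w) := by
      funext w; simp
    rw [this]
    exact altS_poly_zero (n+1) (X ^ n) (by simp [Polynomial.natDegree_X_pow]) z
  rw [hD0, hDn1]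
  simp

noncomputable def epoly (n : ℕ) : ℂ[X] :=
  ∑ k ∈ range (n + 1), C ((1:ℂ) / 2 ^ k) *
    ∑ j ∈ range (k + 1), C (((-1:ℂ)) ^ j * (k.choose j : ℂ)) * (X + C (j:ℂ)) ^ n

lemma epoly_eval (n : ℕ) (z : ℂ) : (epoly n).eval z = eulerPoly n z := by
  unfold epoly eulerPoly
  simp [eval_finset_sum]

noncomputable def bernC (N : ℕ) : ℂ[X] := (Polynomial.bernoulli N).map (algebraMap ℚ ℂ)

lemma bernC_eval (N : ℕ) (z : ℂ) : (bernC N).eval z = bernoulliPoly N z := by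
  rw [bernC, Polynomial.eval_map, bernoulliPoly, Polynomial.aeval_def,
    Polynomial.eval₂_eq_eval_map, Polynomial.eval_map]

noncomputable def Qpoly (n : ℕ) : ℂ[X] :=
  C ((2:ℂ)^(n+1) / (n+1)) *
    ((bernC (n+1)).comp (C ((1:ℂ)/2) * X + C ((1:ℂ)/2)) - (bernC (n+1)).comp (C ((1:ℂ)/2) * X))

lemma Qpoly_eval (n : ℕ) (z : ℂ) : (Qpoly n).eval z =
    (2:ℂ)^(n+1) / (n+1) * (bernoulliPoly (n+1) ((z+1)/2) - bernoulliPoly (n+1) (z/2)) := by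
  unfold Qpoly
  simp only [eval_mul, eval_C, eval_sub, eval_comp, eval_add, eval_X, bernC_eval]
  ring_nf

lemma Qpoly_funeq (n : ℕ) (z : ℂ) :
    (Qpoly n).eval z + (Qpoly n).eval (z + 1) = 2 * z ^ n := by
  rw [Qpoly_eval, Qpoly_eval]
  have h1 : (z + 1 + 1) / 2 = z / 2 + 1 := by ring
  rw [h1, bernoulliPoly_add_one (n+1) (z/2)]
  have h2 : ((n+1 : ℕ) : ℂ) ≠ 0 := Nat.cast_ne_zero.mpr (Nat.succ_ne_zero n)
  push_cast at h2 ⊢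
  field_simp
  have h3 : (1/2:ℂ)^n * 2^n = 1 := by rw [← mul_pow]; norm_num
  linear_combination (z^n*n*2 + z^n*2) * h3

/-- Closed form of the Euler polynomial in terms of Bernoulli polynomials. -/
lemma eulerPoly_closed (n : ℕ) (z : ℂ) : eulerPoly n z =
    (2:ℂ)^(n+1) / (n+1) * (bernoulliPoly (n+1) ((z+1)/2) - bernoulliPoly (n+1) (z/2)) := by
  have := poly_eq_of_avg (epoly n) (Qpoly n) (by
    intro w
    rw [epoly_eval, epoly_eval, Qpoly_funeq, eulerPoly_funeq])
  rw [← epoly_eval, this, Qpoly_eval]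

lemma bern_odd_zero {m : ℕ} (hodd : Odd m) (hne : m ≠ 1) : _root_.bernoulli m = 0 := by
  rcases eq_or_ne m 1 with rfl | h
  · exact absurd rfl hne
  · rw [bernoulli_eq_bernoulli'_of_ne_one h]
    rcases Nat.lt_or_ge m 2 with hlt | hge
    · interval_cases m
      · simp at hodd
      · exact absurd rfl hne
    · exact bernoulli'_eq_zero_of_odd hodd (by omega)

lemma bernoulli'_eq_neg_pow (N : ℕ) : bernoulli' N = (-1) ^ N * _root_.bernoulli N := by
  rcases eq_or_ne N 1 with rfl | h
  · rw [bernoulli'_one, _root_.bernoulli_one]; norm_num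
  · rw [← bernoulli_eq_bernoulli'_of_ne_one h]
    rcases Nat.even_or_odd N with he | ho
    · rw [he.neg_one_pow, one_mul]
    · rw [bern_odd_zero ho h]; simp

lemma bernoulliPoly_ratCast (N : ℕ) (q : ℚ) :
    bernoulliPoly N (q : ℂ) = (((Polynomial.bernoulli N).eval q : ℚ) : ℂ) := by
  unfold bernoulliPoly
  have : (q : ℂ) = algebraMap ℚ ℂ q := by norm_num
  rw [this, Polynomial.aeval_algebraMap_apply]
  simp

lemma bernoulliPoly_reflect (N : ℕ) (z : ℂ) :
    bernoulliPoly N (1 - z) = (-1) ^ N * bernoulliPoly N z := by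
  rcases Nat.eq_zero_or_pos N with rfl | hN
  · simp [bernoulliPoly]
  set h : ℂ[X] := (bernC N).comp (C 1 - X) - C ((-1:ℂ)^N) * bernC N with hh
  have heval : ∀ w : ℂ, h.eval w = bernoulliPoly N (1 - w) - (-1:ℂ)^N * bernoulliPoly N w := by
    intro w
    simp [hh, eval_comp, bernC_eval]
  have hper : ∀ w : ℂ, h.eval (w + 1) = h.eval w := by
    intro w
    rw [heval, heval]
    have e1 : (1 : ℂ) - (w + 1) = -w := by ring
    have e2 : (1 : ℂ) - w = -w + 1 := by ring
    rw [e1, e2, bernoulliPoly_add_one N (-w), bernoulliPoly_add_one N w]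
    have e3 : (-w) ^ (N - 1) = (-1:ℂ)^(N-1) * w ^ (N-1) := by
      rw [neg_pow]
    have e4 : (-1:ℂ)^N = -(-1:ℂ)^(N-1) := by
      conv_lhs => rw [show N = (N-1)+1 by omega]
      rw [pow_succ]
      ring
    rw [e3, e4]
    ring
  have hconst := poly_const_of_periodic_s16 h 1 one_ne_zero hper
  have h0 : h.eval 0 = 0 := by
    rw [heval]
    norm_num
    rw [show (1 : ℂ) = ((1:ℚ) : ℂ) by norm_num, show (0 : ℂ) = ((0:ℚ) : ℂ) by norm_num,
      bernoulliPoly_ratCast, bernoulliPoly_ratCast, Polynomial.bernoulli_eval_one,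
      Polynomial.bernoulli_eval_zero, bernoulli'_eq_neg_pow]
    push_cast
    ring
  have hz : ∀ w : ℂ, h.eval w = 0 := by
    intro w; rw [hconst, h0]; simp
  have := hz z
  rw [heval] at this
  linear_combination this

lemma bernoulliNumber_eq (m : ℕ) : bernoulliNumber m = ((_root_.bernoulli m : ℚ) : ℂ) := by
  rw [bernoulliNumber, show (0:ℂ) = ((0:ℚ):ℂ) by norm_num, bernoulliPoly_ratCast,
    Polynomial.bernoulli_eval_zero]

lemma bernoulliPoly_half_odd {N : ℕ} (h : Odd N) : bernoulliPoly N (1/2 : ℂ) = 0 := by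
  have := bernoulliPoly_reflect N (1/2 : ℂ)
  rw [show (1 : ℂ) - 1/2 = 1/2 by norm_num, h.neg_one_pow] at this
  linear_combination this / 2

lemma bernoulliPoly_explicit (N : ℕ) (z : ℂ) :
    bernoulliPoly N z = ∑ i ∈ range (N+1), (_root_.bernoulli i : ℂ) * (N.choose i : ℂ) * z ^ (N - i) := by
  unfold bernoulliPoly
  rw [Polynomial.bernoulli, map_sum]
  apply Finset.sum_congr rfl
  intro i _
  rw [Polynomial.aeval_monomial, map_mul, eq_ratCast (algebraMap ℚ ℂ), eq_ratCast (algebraMap ℚ ℂ)]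
  push_cast
  ring

lemma bern_sum_eval (N : ℕ) (a : ℂ) (ha : a ≠ 0) :
    ∑ m ∈ range (N+1), (N.choose m : ℂ) * a ^ m * (_root_.bernoulli m : ℂ)
      = a ^ N * bernoulliPoly N (1 / a) := by
  rw [bernoulliPoly_explicit, Finset.mul_sum]
  apply Finset.sum_congr rfl
  intro i hi
  have hle : i ≤ N := Nat.lt_succ_iff.mp (Finset.mem_range.mp hi)
  have hpow : a ^ N * (1/a) ^ (N - i) = a ^ i := by
    rw [show N = i + (N - i) by omega, pow_add]
    field_simp
    rw [Nat.add_sub_cancel_left, ← mul_pow, mul_one_div_cancel ha, one_pow]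
  calc (N.choose i : ℂ) * a ^ i * (_root_.bernoulli i : ℂ)
      = (_root_.bernoulli i : ℂ) * (N.choose i : ℂ) * (a ^ N * (1/a) ^ (N-i)) := by rw [hpow]; ring
    _ = a ^ N * ((_root_.bernoulli i : ℂ) * (N.choose i : ℂ) * (1/a) ^ (N - i)) := by ring

lemma eulerNumber_closed (n : ℕ) :
    eulerNumber n = (2:ℂ)^(2*n+1) / (n+1) *
      (bernoulliPoly (n+1) (3/4) - bernoulliPoly (n+1) (1/4)) := by
  rw [eulerNumber, eulerPoly_closed]
  rw [show ((1:ℂ)/2 + 1)/2 = 3/4 by norm_num, show ((1:ℂ)/2)/2 = 1/4 by norm_num]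
  rw [show 2*n+1 = n + (n+1) by omega, pow_add]
  ring

lemma reindex_even (n : ℕ) (hn : Even n) (g : ℕ → ℂ) (hodd : ∀ m, Odd m → g m = 0) :
    ∑ k ∈ range (n/2 + 1), g (n - 2*k) = ∑ m ∈ range (n + 2), g m := by
  have h1 : ∑ m ∈ range (n + 2), g m = ∑ m ∈ (range (n + 2)).filter (fun m => Even m), g m := by
    rw [Finset.sum_filter_of_ne]
    intro m _ hg
    rcases Nat.even_or_odd m with he | ho
    · exact he
    · exact absurd (hodd m ho) hg
  rw [h1]
  apply Finset.sum_nbij' (i := fun k => n - 2*k) (j := fun m => (n - m)/2)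
  · intro k hk
    simp only [Finset.mem_filter, Finset.mem_range] at *
    obtain ⟨r, hr⟩ := hn
    constructor
    · omega
    · refine ⟨r - k, by omega⟩
  · intro m hm
    simp only [Finset.mem_filter, Finset.mem_range] at *
    obtain ⟨r, hr⟩ := hn
    obtain ⟨s, hs⟩ := hm.2
    omega
  · intro k hk
    simp only [Finset.mem_range] at hk
    omega
  · intro m hm
    simp only [Finset.mem_filter, Finset.mem_range] at hm
    obtain ⟨r, hr⟩ := hn
    obtain ⟨s, hs⟩ := hm.2
    omega
  · intro k _
    rfl

theorem stmt16 (n : ℕ) :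
    eulerNumber n = ∑ k ∈ range (n / 2 + 1), (2 : ℂ) ^ (n - 2 * k) / (2 * k + 1) *
      (2 - 2 ^ (n - 2 * k)) * (n.choose (2 * k) : ℂ) * bernoulliNumber (n - 2 * k) := by
  have hB14 : bernoulliPoly (n+1) (3/4 : ℂ) = (-1:ℂ)^(n+1) * bernoulliPoly (n+1) (1/4 : ℂ) := by
    have := bernoulliPoly_reflect (n+1) (1/4 : ℂ)
    rwa [show (1:ℂ) - 1/4 = 3/4 by norm_num] at this
  rcases Nat.even_or_odd n with hn | hn
  · -- n even
    have hodd : Odd (n+1) := hn.add_one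
    have h4pow : (4:ℂ)^(n+1) = 2^(2*n+1) * 2 := by
      rw [show (4:ℂ) = 2^2 by norm_num, ← pow_mul, show 2*(n+1) = (2*n+1)+1 by ring, pow_succ]
    have hL : eulerNumber n = -(4:ℂ)^(n+1) / (n+1) * bernoulliPoly (n+1) (1/4 : ℂ) := by
      rw [eulerNumber_closed, hB14, hodd.neg_one_pow, h4pow]
      ring
    rw [hL]
    -- rewrite each term of the RHS
    have hterm : ∀ k ∈ range (n/2 + 1),
        (2 : ℂ) ^ (n - 2*k) / (2*k + 1) * (2 - 2 ^ (n - 2*k)) * (n.choose (2*k) : ℂ) *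
          bernoulliNumber (n - 2*k)
        = (1 / (n+1 : ℂ)) * (((n+1).choose (n - 2*k) : ℂ) * (2 * 2^(n-2*k) - 4^(n-2*k)) *
            ((_root_.bernoulli (n - 2*k) : ℚ) : ℂ)) := by
      intro k hk
      have h2k : 2*k ≤ n := by
        have := Finset.mem_range.mp hk; omega
      have hchoose : (n+1) * n.choose (2*k) = (n+1).choose (n - 2*k) * (2*k+1) := by
        have h1 := Nat.add_one_mul_choose_eq n (2*k)
        have h2 : (n+1).choose (n - 2*k) = (n+1).choose (2*k+1) := by
          rw [show n - 2*k = (n+1) - (2*k+1) by omega]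
          exact Nat.choose_symm (by omega)
        rw [h2]
        simpa [Nat.succ_eq_add_one] using h1
      have hchooseC : ((n:ℂ)+1) * (n.choose (2*k) : ℂ) = ((n+1).choose (n - 2*k) : ℂ) * (2*(k:ℂ)+1) := by
        exact_mod_cast congrArg (Nat.cast : ℕ → ℂ) hchoose
      rw [bernoulliNumber_eq]
      have hk1 : (2*(k:ℂ)+1) ≠ 0 := by
        intro h
        have : (2*(k:ℕ)+1 : ℂ) = 0 := by push_cast; linear_combination h
        exact (by positivity : (0:ℝ) < 2*(k:ℝ)+1).ne' (by exact_mod_cast congrArg Complex.re this)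
      have hn1 : ((n:ℂ)+1) ≠ 0 := Nat.cast_add_one_ne_zero n
      have h4 : (4:ℂ)^(n-2*k) = 2^(n-2*k) * 2^(n-2*k) := by
        rw [show (4:ℂ) = 2*2 by norm_num, mul_pow]
      field_simp
      rw [h4]
      linear_combination ((2:ℂ)^(n-2*k) * (2 - 2^(n-2*k)) * ((_root_.bernoulli (n - 2*k) : ℚ) : ℂ)) * hchooseC
    rw [Finset.sum_congr rfl hterm, ← Finset.mul_sum]
    set g : ℕ → ℂ := fun m => ((n+1).choose m : ℂ) * (2 * 2^m - 4^m) * ((_root_.bernoulli m : ℚ) : ℂ) with hg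
    have hgodd : ∀ m, Odd m → g m = 0 := by
      intro m hm
      rcases eq_or_ne m 1 with rfl | hne
      · simp only [hg]
        norm_num
      · simp [hg, bern_odd_zero hm hne]
    rw [reindex_even n hn g hgodd]
    have hsplit : ∑ m ∈ range (n+2), g m
        = 2 * ∑ m ∈ range (n+2), ((n+1).choose m : ℂ) * 2^m * ((_root_.bernoulli m : ℚ) : ℂ)
          - ∑ m ∈ range (n+2), ((n+1).choose m : ℂ) * 4^m * ((_root_.bernoulli m : ℚ) : ℂ) := by
      rw [Finset.mul_sum, ← Finset.sum_sub_distrib]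
      apply Finset.sum_congr rfl
      intro m _
      simp only [hg]
      ring
    rw [hsplit, bern_sum_eval (n+1) 2 (by norm_num), bern_sum_eval (n+1) 4 (by norm_num),
      bernoulliPoly_half_odd hodd]
    have hn1 : ((n:ℂ)+1) ≠ 0 := Nat.cast_add_one_ne_zero n
    field_simp
    ring
  · -- n odd
    have hL : eulerNumber n = 0 := by
      rw [eulerNumber_closed, hB14, (hn.add_one).neg_one_pow, one_mul]
      ring
    rw [hL]
    symm
    apply Finset.sum_eq_zero
    intro k hk
    have h2k : 2*k ≤ n := by
      have := Finset.mem_range.mp hk; omega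
    have hmodd : Odd (n - 2*k) := by
      obtain ⟨r, hr⟩ := hn
      exact ⟨r - k, by omega⟩
    rcases eq_or_ne (n - 2*k) 1 with he | hne
    · rw [he]
      norm_num
    · rw [bernoulliNumber_eq, bern_odd_zero hmodd hne]
      simp
end
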